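/- arXiv:2002.09028 — 4 statements merged into one kernel-verified Lean document; each statement's English description precedes it below -/
import Mathlib

section
/- Let Ĝ be a finite simple graph, K ⊆ V(Ĝ), O = V(Ĝ) ∖ K, r ≥ 1 and k natural numbers. Let G' be obtained from Ĝ by attaching to every vertex v ∈ O a pendant path of 2r new vertices. Then G' has a set D' with |D'| ≤ k + |O| and |N^r_{G'}[x] ∩ D'| = 1 for every vertex x of G' (an r-perfect code), if and only if Ĝ has a set D̂ ⊆ K with |D̂| ≤ k such that |N^r_{Ĝ}[v] ∩ D̂| = 1 for every v ∈ K and |N^r_{Ĝ}[v] ∩ D̂| ≤ 1 for every v ∈ O. -/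
def SimpleGraph.addPaths {V : Type*} (G : SimpleGraph V) (B P : Type*)
    (src dst : P → V ⊕ B) (len : P → ℕ) :
    SimpleGraph ((V ⊕ B) ⊕ (Σ p : P, Fin (len p - 1))) :=
  SimpleGraph.fromRel (fun x y =>
    (∃ u w, G.Adj u w ∧ x = .inl (.inl u) ∧ y = .inl (.inl w)) ∨
    (∃ p : P, len p = 1 ∧ x = .inl (src p) ∧ y = .inl (dst p)) ∨
    (∃ p : P, ∃ i : Fin (len p - 1), (i : ℕ) = 0 ∧ x = .inl (src p) ∧ y = .inr ⟨p, i⟩) ∨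
    (∃ p : P, ∃ i j : Fin (len p - 1), (i : ℕ) + 1 = (j : ℕ) ∧ x = .inr ⟨p, i⟩ ∧ y = .inr ⟨p, j⟩) ∨
    (∃ p : P, ∃ i : Fin (len p - 1), (i : ℕ) + 2 = len p ∧ x = .inr ⟨p, i⟩ ∧ y = .inl (dst p)))
def SimpleGraph.attachPendants {V : Type*} [Fintype V] [DecidableEq V]
    (G : SimpleGraph V) (O : Finset V) (ℓ : ℕ) :
    SimpleGraph ((V ⊕ {o : V // o ∈ O}) ⊕ (Σ _p : {o : V // o ∈ O}, Fin (ℓ - 1))) :=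
  G.addPaths {o : V // o ∈ O} {o : V // o ∈ O} (fun o => .inl o.1) (fun o => .inr o)
    (fun _ => ℓ)
namespace PCaux
variable {V : Type*} [Fintype V] [DecidableEq V]
abbrev VT (V : Type*) [Fintype V] [DecidableEq V] (O : Finset V) (r : ℕ) :=
  (V ⊕ {o : V // o ∈ O}) ⊕ (Σ _p : {o : V // o ∈ O}, Fin (2 * r - 1))
variable {O : Finset V} {r : ℕ}
def base : VT V O r → V
  | .inl (.inl v) => v
  | .inl (.inr o) => o.1
  | .inr ⟨o, _⟩ => o.1
def depth : VT V O r → ℕ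
  | .inl (.inl _) => 0
  | .inl (.inr _) => 2 * r
  | .inr ⟨_, i⟩ => (i : ℕ) + 1
def seg : VT V O r → Option {o : V // o ∈ O}
  | .inl (.inl _) => none
  | .inl (.inr o) => some o
  | .inr ⟨o, _⟩ => some o

lemma class_of_rel (G : SimpleGraph V) {x y : VT V O r}
    (h : (∃ u w, G.Adj u w ∧ x = .inl (.inl u) ∧ y = .inl (.inl w)) ∨
    (∃ p : {o : V // o ∈ O}, 2 * r = 1 ∧ x = .inl (.inl p.1) ∧ y = .inl (.inr p)) ∨
    (∃ p : {o : V // o ∈ O}, ∃ i : Fin (2 * r - 1), (i : ℕ) = 0 ∧ x = .inl (.inl p.1) ∧ y = .inr ⟨p, i⟩) ∨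
    (∃ p : {o : V // o ∈ O}, ∃ i j : Fin (2 * r - 1), (i : ℕ) + 1 = (j : ℕ) ∧ x = .inr ⟨p, i⟩ ∧ y = .inr ⟨p, j⟩) ∨
    (∃ p : {o : V // o ∈ O}, ∃ i : Fin (2 * r - 1), (i : ℕ) + 2 = 2 * r ∧ x = .inr ⟨p, i⟩ ∧ y = .inl (.inr p))) :
    (G.Adj (base x) (base y) ∧ depth x = 0 ∧ depth y = 0 ∧ seg x = none ∧ seg y = none) ∨
    (∃ o : {o : V // o ∈ O}, base x = o.1 ∧ base y = o.1 ∧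
      (depth x + 1 = depth y ∨ depth y + 1 = depth x) ∧
      (seg x = some o ∨ (seg x = none ∧ depth x = 0)) ∧
      (seg y = some o ∨ (seg y = none ∧ depth y = 0))) := by
  obtain ⟨u, w, hadj, rfl, rfl⟩ | ⟨p, h1, _⟩ | ⟨p, i, hi, rfl, rfl⟩ |
      ⟨p, i, j, hij, rfl, rfl⟩ | ⟨p, i, hi, rfl, rfl⟩ := h
  · exact Or.inl ⟨hadj, rfl, rfl, rfl, rfl⟩
  · omega
  · exact Or.inr ⟨p, rfl, rfl, Or.inl (by simp [depth, hi]), Or.inr ⟨rfl, rfl⟩, Or.inl rfl⟩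
  · exact Or.inr ⟨p, rfl, rfl, Or.inl (by simp [depth]; omega), Or.inl rfl, Or.inl rfl⟩
  · exact Or.inr ⟨p, rfl, rfl, Or.inl (by simp [depth]; omega), Or.inl rfl, Or.inl rfl⟩

lemma adj_class {G : SimpleGraph V} {x y : VT V O r}
    (h : (G.attachPendants O (2 * r)).Adj x y) :
    (G.Adj (base x) (base y) ∧ depth x = 0 ∧ depth y = 0 ∧ seg x = none ∧ seg y = none) ∨
    (∃ o : {o : V // o ∈ O}, base x = o.1 ∧ base y = o.1 ∧
      (depth x + 1 = depth y ∨ depth y + 1 = depth x) ∧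
      (seg x = some o ∨ (seg x = none ∧ depth x = 0)) ∧
      (seg y = some o ∨ (seg y = none ∧ depth y = 0))) := by
  rw [SimpleGraph.attachPendants, SimpleGraph.addPaths, SimpleGraph.fromRel_adj] at h
  obtain ⟨hne, h | h⟩ := h
  · exact class_of_rel G h
  · rcases class_of_rel G h with ⟨h1, h2, h3, h4, h5⟩ | ⟨o, h1, h2, h3, h4, h5⟩
    · exact Or.inl ⟨h1.symm, h3, h2, h5, h4⟩
    · exact Or.inr ⟨o, h2, h1, h3.symm, h5, h4⟩
end PCaux

namespace PCaux
variable {V : Type*} [Fintype V] [DecidableEq V] {O : Finset V} {r : ℕ}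

lemma base_of_seg {x : VT V O r} {o} (h : seg x = some o) : base x = o.1 := by
  cases x with
  | inl a => cases a with
    | inl v => simp [seg] at h
    | inr o' => simp [seg] at h; simp [base, h]
  | inr p => obtain ⟨o', i⟩ := p; simp [seg] at h; simp [base, h]

lemma depth_pos_of_seg (hr : 1 ≤ r) {x : VT V O r} {o} (h : seg x = some o) :
    1 ≤ depth x := by
  cases x with
  | inl a => cases a with
    | inl v => simp [seg] at h
    | inr o' => simp [depth]; omega
  | inr p => obtain ⟨o', i⟩ := p; simp [depth]

lemma depth_le {x : VT V O r} : depth x ≤ 2 * r := by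
  cases x with
  | inl a => cases a <;> simp [depth]
  | inr p => obtain ⟨o', i⟩ := p; have := i.2; simp [depth]; omega

/-- master projection lemma -/
lemma walk_project {G : SimpleGraph V} {x y : VT V O r}
    (w : (G.attachPendants O (2 * r)).Walk x y) :
    (∃ q : G.Walk (base x) (base y), q.length + depth x + depth y ≤ w.length) ∨
    (∃ o, seg x = some o ∧ seg y = some o ∧
      depth x ≤ depth y + w.length ∧ depth y ≤ depth x + w.length) := by
  induction w with
  | nil =>
    rename_i u
    cases u with
    | inl a => cases a with
      | inl v => exact Or.inl ⟨SimpleGraph.Walk.nil, by simp [depth]⟩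
      | inr o' => exact Or.inr ⟨o', rfl, rfl, by omega, by omega⟩
    | inr p =>
      obtain ⟨o', i⟩ := p
      exact Or.inr ⟨o', rfl, rfl, by omega, by omega⟩
  | cons h w ih =>
    rename_i a b c
    rcases adj_class h with ⟨hadj, hda, hdb, hsa, hsb⟩ | ⟨o, hba, hbb, hd, hsa, hsb⟩
    · rcases ih with ⟨q, hq⟩ | ⟨o, hso, _, _, _⟩
      · exact Or.inl ⟨q.cons hadj, by simp [SimpleGraph.Walk.length_cons]; omega⟩
      · exact absurd (hsb.symm.trans hso) (by simp)
    · rcases ih with ⟨q, hq⟩ | ⟨o', hsb', hsc, hd1, hd2⟩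
      · left
        refine ⟨q.copy (by rw [hba, hbb]) rfl, ?_⟩
        simp only [SimpleGraph.Walk.length_copy, SimpleGraph.Walk.length_cons]
        omega
      · -- seg b = some o'
        rcases hsb with hsb | ⟨hsb, hdb0⟩
        · have ho : o = o' := by rw [hsb] at hsb'; exact Option.some_inj.mp hsb'
          subst ho
          rcases hsa with hsa | ⟨hsa, hda0⟩
          · exact Or.inr ⟨o, hsa, hsc, by simp [SimpleGraph.Walk.length_cons]; omega,
              by simp [SimpleGraph.Walk.length_cons]; omega⟩
          · -- a is the base vertex o.1, depth a = 0, depth b = 1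
            left
            have hbc : base c = o.1 := base_of_seg hsc
            refine ⟨SimpleGraph.Walk.nil.copy (by rw [hba]) (by rw [hbc]), ?_⟩
            have hdb1 : depth b = 1 := by omega
            have hdc : depth c ≤ depth b + SimpleGraph.Walk.length w := hd2
            simp only [SimpleGraph.Walk.length_copy, SimpleGraph.Walk.length_nil,
              SimpleGraph.Walk.length_cons]
            omega
        · rw [hsb] at hsb'; exact absurd hsb' (by simp)
end PCaux

namespace PCaux
variable {V : Type*} [Fintype V] [DecidableEq V] {O : Finset V} {r : ℕ}

/-- position `j` (0 ≤ j ≤ 2r) on the pendant path of `o` -/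
def pvert (o : {o : V // o ∈ O}) (j : ℕ) : VT V O r :=
  if h : 0 < j ∧ j < 2 * r then .inr ⟨o, ⟨j - 1, by omega⟩⟩
  else if j = 0 then .inl (.inl o.1) else .inl (.inr o)

lemma pvert_zero (o : {o : V // o ∈ O}) : (pvert o 0 : VT V O r) = .inl (.inl o.1) := by
  simp [pvert]

lemma pvert_mid (o : {o : V // o ∈ O}) {j : ℕ} (h1 : 0 < j) (h2 : j < 2 * r) :
    (pvert o j : VT V O r) = .inr ⟨o, ⟨j - 1, by omega⟩⟩ := by
  rw [pvert, dif_pos ⟨h1, h2⟩]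

lemma pvert_top (hr : 1 ≤ r) (o : {o : V // o ∈ O}) :
    (pvert o (2 * r) : VT V O r) = .inl (.inr o) := by
  simp [pvert]; omega

lemma depth_pvert (hr : 1 ≤ r) (o : {o : V // o ∈ O}) {j : ℕ} (hj : j ≤ 2 * r) :
    depth (pvert o j : VT V O r) = j := by
  rcases Nat.eq_zero_or_pos j with rfl | h1
  · rw [pvert_zero]; rfl
  · rcases Nat.lt_or_ge j (2 * r) with h2 | h2
    · rw [pvert_mid o h1 h2]; simp [depth]; omega
    · have : j = 2 * r := by omega
      subst this; rw [pvert_top hr]; rfl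

lemma seg_pvert (hr : 1 ≤ r) (o : {o : V // o ∈ O}) {j : ℕ} (hj1 : 1 ≤ j) (hj : j ≤ 2 * r) :
    seg (pvert o j : VT V O r) = some o := by
  rcases Nat.lt_or_ge j (2 * r) with h2 | h2
  · rw [pvert_mid o hj1 h2]; rfl
  · have : j = 2 * r := by omega
    subst this; rw [pvert_top hr]; rfl

lemma base_pvert (o : {o : V // o ∈ O}) {j : ℕ} : base (pvert o j : VT V O r) = o.1 := by
  by_cases h : 0 < j ∧ j < 2 * r
  · rw [pvert, dif_pos h]; rfl
  · by_cases h0 : j = 0 <;> simp [pvert, h, h0] <;> rfl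

lemma eq_pvert_of_seg (hr : 1 ≤ r) {x : VT V O r} {o} (h : seg x = some o) :
    x = pvert o (depth x) := by
  cases x with
  | inl a => cases a with
    | inl v => simp [seg] at h
    | inr o' =>
      simp [seg] at h; subst h; simp only [depth]; rw [pvert_top hr]
  | inr p =>
    obtain ⟨o', i⟩ := p
    simp [seg] at h; subst h
    have h2 := i.2
    simp only [depth]
    rw [pvert_mid o' (by omega) (by omega)]
    simp

lemma adj_step {G : SimpleGraph V} (hr : 1 ≤ r) (o : {o : V // o ∈ O}) {j : ℕ}
    (hj : j + 1 ≤ 2 * r) :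
    (G.attachPendants O (2 * r)).Adj (pvert o j) (pvert o (j + 1)) := by
  have hne : (pvert o j : VT V O r) ≠ pvert o (j + 1) := by
    intro hcon
    have := congrArg depth hcon
    rw [depth_pvert hr o (by omega), depth_pvert hr o hj] at this
    omega
  rw [SimpleGraph.attachPendants, SimpleGraph.addPaths, SimpleGraph.fromRel_adj]
  refine ⟨hne, Or.inl ?_⟩
  rcases Nat.eq_zero_or_pos j with rfl | hj0
  · refine Or.inr (Or.inr (Or.inl ⟨o, ⟨0, by omega⟩, rfl, ?_, ?_⟩))
    · rw [pvert_zero]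
    · rw [pvert_mid o (by omega) (by omega)]
  · rcases Nat.lt_or_ge (j + 1) (2 * r) with hlt | hge
    · refine Or.inr (Or.inr (Or.inr (Or.inl
        ⟨o, ⟨j - 1, by omega⟩, ⟨j + 1 - 1, by omega⟩, by simp; omega, ?_, ?_⟩)))
      · rw [pvert_mid o hj0 (by omega)]
      · rw [pvert_mid o (by omega) hlt]
    · have hj1 : j + 1 = 2 * r := by omega
      refine Or.inr (Or.inr (Or.inr (Or.inr
        ⟨o, ⟨j - 1, by omega⟩, by simp; omega, ?_, ?_⟩)))
      · rw [pvert_mid o hj0 (by omega)]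
      · rw [hj1, pvert_top hr]

/-- walk up a pendant path -/
lemma walk_pvert {G : SimpleGraph V} (hr : 1 ≤ r) (o : {o : V // o ∈ O}) {a b : ℕ}
    (hab : a ≤ b) (hb : b ≤ 2 * r) :
    ∃ w : (G.attachPendants O (2 * r)).Walk (pvert o a) (pvert o b), w.length = b - a := by
  induction b with
  | zero =>
    have : a = 0 := by omega
    subst this; exact ⟨SimpleGraph.Walk.nil, rfl⟩
  | succ n ih =>
    rcases Nat.lt_or_ge a (n + 1) with h | h
    · obtain ⟨w, hw⟩ := ih (by omega) (by omega)
      exact ⟨w.concat (adj_step hr o hb), by simp [SimpleGraph.Walk.length_concat]; omega⟩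
    · have : a = n + 1 := by omega
      subst this; exact ⟨SimpleGraph.Walk.nil, by simp⟩

/-- walk between two positions on a pendant path -/
lemma walk_pvert' {G : SimpleGraph V} (hr : 1 ≤ r) (o : {o : V // o ∈ O}) {a b : ℕ}
    (ha : a ≤ 2 * r) (hb : b ≤ 2 * r) :
    ∃ w : (G.attachPendants O (2 * r)).Walk (pvert o a) (pvert o b),
      w.length = max a b - min a b := by
  rcases Nat.le_total a b with h | h
  · obtain ⟨w, hw⟩ := walk_pvert hr o h hb
    exact ⟨w, by omega⟩
  · obtain ⟨w, hw⟩ := walk_pvert hr o h ha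
    exact ⟨w.reverse, by simp [SimpleGraph.Walk.length_reverse]; omega⟩

/-- embedding of `G` into the pendant graph -/
def emb (G : SimpleGraph V) (O : Finset V) (r : ℕ) :
    G →g G.attachPendants O (2 * r) where
  toFun v := .inl (.inl v)
  map_rel' := by
    intro u w h
    rw [SimpleGraph.attachPendants, SimpleGraph.addPaths, SimpleGraph.fromRel_adj]
    exact ⟨by simp [h.ne], Or.inl (Or.inl ⟨u, w, h, rfl, rfl⟩)⟩

end PCaux

namespace PCaux
variable {V : Type*} [Fintype V] [DecidableEq V] {O : Finset V} {r : ℕ} {G : SimpleGraph V}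

/-- member: base vertex, target: base vertex -/
lemma mem_base_base {y v : V} :
    (∃ w : (G.attachPendants O (2 * r)).Walk (.inl (.inl y)) (.inl (.inl v)), w.length ≤ r) ↔
    (∃ q : G.Walk y v, q.length ≤ r) := by
  constructor
  · rintro ⟨w, hw⟩
    rcases walk_project w with ⟨q, hq⟩ | ⟨o, hso, -, -, -⟩
    · exact ⟨q, by simp [base] at hq ⊢; simp [depth] at hq; omega⟩
    · simp [seg] at hso
  · rintro ⟨q, hq⟩
    have e1 : (emb G O r) y = (Sum.inl (Sum.inl y) : VT V O r) := rfl
    have e2 : (emb G O r) v = (Sum.inl (Sum.inl v) : VT V O r) := rfl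
    exact ⟨(q.map (emb G O r)).copy e1 e2, by simpa using hq⟩

/-- member: base vertex, target: pendant vertex -/
lemma mem_base_pvert (hr : 1 ≤ r) {y : V} {o : {o : V // o ∈ O}} {e : ℕ}
    (he1 : 1 ≤ e) (he : e ≤ 2 * r) :
    (∃ w : (G.attachPendants O (2 * r)).Walk (.inl (.inl y)) (pvert o e), w.length ≤ r) ↔
    (∃ q : G.Walk y o.1, q.length + e ≤ r) := by
  constructor
  · rintro ⟨w, hw⟩
    rcases walk_project w with ⟨q, hq⟩ | ⟨o', hso, -, -, -⟩
    · have e1 : base (Sum.inl (Sum.inl y) : VT V O r) = y := rfl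
      refine ⟨q.copy e1 (base_pvert o), ?_⟩
      rw [depth_pvert hr o he] at hq
      simp only [SimpleGraph.Walk.length_copy]
      simp [depth] at hq; omega
    · simp [seg] at hso
  · rintro ⟨q, hq⟩
    obtain ⟨w2, hw2⟩ := walk_pvert (G := G) hr o (Nat.zero_le e) he
    have e1 : (emb G O r) y = (Sum.inl (Sum.inl y) : VT V O r) := rfl
    have e2 : (emb G O r) o.1 = (pvert o 0 : VT V O r) := (pvert_zero o).symm
    refine ⟨((q.map (emb G O r)).copy e1 e2).append w2, ?_⟩
    simp [SimpleGraph.Walk.length_append, hw2]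
    omega

/-- member: pendant vertex, target: base vertex -/
lemma mem_pvert_base (hr : 1 ≤ r) {v : V} {o : {o : V // o ∈ O}} {d : ℕ}
    (hd1 : 1 ≤ d) (hd : d ≤ 2 * r) :
    (∃ w : (G.attachPendants O (2 * r)).Walk (pvert o d) (.inl (.inl v)), w.length ≤ r) ↔
    (∃ q : G.Walk o.1 v, q.length + d ≤ r) := by
  constructor
  · rintro ⟨w, hw⟩
    rcases walk_project w with ⟨q, hq⟩ | ⟨o', -, hsv, -, -⟩
    · have e1 : base (Sum.inl (Sum.inl v) : VT V O r) = v := rfl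
      refine ⟨q.copy (base_pvert o) e1, ?_⟩
      rw [depth_pvert hr o hd] at hq
      simp only [SimpleGraph.Walk.length_copy]
      simp [depth] at hq; omega
    · simp [seg] at hsv
  · rintro ⟨q, hq⟩
    obtain ⟨w1, hw1⟩ := walk_pvert (G := G) hr o (Nat.zero_le d) hd
    have e1 : (emb G O r) o.1 = (Sum.inl (Sum.inl o.1) : VT V O r) := rfl
    have e2 : (emb G O r) v = (Sum.inl (Sum.inl v) : VT V O r) := rfl
    refine ⟨(w1.reverse.copy rfl (pvert_zero o)).append ((q.map (emb G O r)).copy e1 e2), ?_⟩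
    simp [SimpleGraph.Walk.length_append, hw1]
    omega

/-- member: pendant vertex, target: pendant vertex of the same path -/
lemma mem_pvert_pvert (hr : 1 ≤ r) {o : {o : V // o ∈ O}} {d e : ℕ}
    (hd1 : 1 ≤ d) (hd : d ≤ 2 * r) (he1 : 1 ≤ e) (he : e ≤ 2 * r) :
    (∃ w : (G.attachPendants O (2 * r)).Walk (pvert o d) (pvert o e), w.length ≤ r) ↔
    (max d e - min d e ≤ r) := by
  constructor
  · rintro ⟨w, hw⟩
    rcases walk_project w with ⟨q, hq⟩ | ⟨o', -, -, h1, h2⟩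
    · rw [depth_pvert hr o hd, depth_pvert hr o he] at hq; omega
    · rw [depth_pvert hr o hd, depth_pvert hr o he] at h1 h2; omega
  · intro h
    obtain ⟨w, hw⟩ := walk_pvert' (G := G) hr o hd he
    exact ⟨w, by omega⟩

/-- member on a different pendant path: forced to route through the base -/
lemma mem_pvert_pvert_cross (hr : 1 ≤ r) {o o' : {o : V // o ∈ O}} (hoo : o ≠ o')
    {d e : ℕ} (hd1 : 1 ≤ d) (hd : d ≤ 2 * r) (he1 : 1 ≤ e) (he : e ≤ 2 * r)
    (h : ∃ w : (G.attachPendants O (2 * r)).Walk (pvert o d) (pvert o' e), w.length ≤ r) :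
    ∃ q : G.Walk o.1 o'.1, q.length + d + e ≤ r := by
  obtain ⟨w, hw⟩ := h
  rcases walk_project w with ⟨q, hq⟩ | ⟨o'', hs1, hs2, -, -⟩
  · refine ⟨q.copy (base_pvert o) (base_pvert o'), ?_⟩
    rw [depth_pvert hr o hd, depth_pvert hr o' he] at hq
    simp only [SimpleGraph.Walk.length_copy]
    omega
  · rw [seg_pvert hr o hd1 hd] at hs1
    rw [seg_pvert hr o' he1 he] at hs2
    exact absurd (Option.some_inj.mp (hs1.trans hs2.symm)) hoo

end PCaux

namespace PCaux
variable {V : Type*} [Fintype V] [DecidableEq V]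

lemma eq_of_seg_none {O : Finset V} {r : ℕ} {x : VT V O r} (h : seg x = none) :
    x = .inl (.inl (base x)) := by
  cases x with
  | inl a => cases a with
    | inl v => rfl
    | inr o => simp [seg] at h
  | inr p => obtain ⟨o, i⟩ := p; simp [seg] at h

lemma backward_dir (Ghat : SimpleGraph V) (K : Finset V) (r k : ℕ) (hr : 1 ≤ r)
    (Dhat : Set V) (hsub : Dhat ⊆ (K : Set V)) (hk : Dhat.ncard ≤ k)
    (hK : ∀ v ∈ K, ({y : V | ∃ w : Ghat.Walk y v, w.length ≤ r} ∩ Dhat).ncard = 1)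
    (hO : ∀ v ∈ Kᶜ, ({y : V | ∃ w : Ghat.Walk y v, w.length ≤ r} ∩ Dhat).ncard ≤ 1) :
    (∃ D' : Set (VT V Kᶜ r),
        D'.ncard ≤ k + Kᶜ.card ∧
        ∀ x, ({y | ∃ w : (Ghat.attachPendants Kᶜ (2 * r)).Walk y x,
                    w.length ≤ r} ∩ D').ncard = 1) := by
  classical
  set T : {o : V // o ∈ Kᶜ} → Set ℕ :=
    fun o => {n | ∃ y ∈ Dhat, ∃ q : Ghat.Walk y o.1, q.length ≤ n} with hT
  set t : {o : V // o ∈ Kᶜ} → ℕ := fun o => sInf (T o) with ht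
  set m : {o : V // o ∈ Kᶜ} → ℕ := fun o => if r ∈ T o then 2 * r + 1 - t o else r with hm
  -- basic facts about t
  have hDK : ∀ {y}, y ∈ Dhat → y ∈ K := fun hy => hsub hy
  have ht_pos : ∀ o, r ∈ T o → 1 ≤ t o := by
    intro o hcov
    by_contra h
    have h0 : t o = 0 := by omega
    have hmem : t o ∈ T o := Nat.sInf_mem ⟨r, hcov⟩
    rw [h0] at hmem
    obtain ⟨y, hy, q, hq⟩ := hmem
    have : y = o.1 := q.eq_of_length_eq_zero (by omega)
    subst this
    exact (Finset.mem_compl.mp o.2) (hDK hy)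
  have ht_le : ∀ o, r ∈ T o → t o ≤ r := fun o hcov => Nat.sInf_le hcov
  have hm_ge : ∀ o, r ≤ m o := by
    intro o; simp only [hm]
    split
    · have := ht_le o (by assumption); omega
    · omega
  have hm_le : ∀ o, m o ≤ 2 * r := by
    intro o; simp only [hm]
    split
    · have := ht_pos o (by assumption); omega
    · omega
  have hm_pos : ∀ o, 1 ≤ m o := fun o => le_trans hr (hm_ge o)
  -- the code
  set D' : Set (VT V Kᶜ r) := ((fun v => (Sum.inl (Sum.inl v) : VT V Kᶜ r)) '' Dhat) ∪
    (Set.range fun o : {o : V // o ∈ Kᶜ} => (pvert o (m o) : VT V Kᶜ r)) with hD'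
  have hmemD' : ∀ z : VT V Kᶜ r, z ∈ D' ↔
      ((∃ y ∈ Dhat, z = Sum.inl (Sum.inl y)) ∨ (∃ o, z = pvert o (m o))) := by
    intro z
    simp only [hD', Set.mem_union, Set.mem_image, Set.mem_range]
    constructor
    · rintro (⟨y, hy, rfl⟩ | ⟨o, rfl⟩)
      · exact Or.inl ⟨y, hy, rfl⟩
      · exact Or.inr ⟨o, rfl⟩
    · rintro (⟨y, hy, rfl⟩ | ⟨o, rfl⟩)
      · exact Or.inl ⟨y, hy, rfl⟩
      · exact Or.inr ⟨o, rfl⟩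
  refine ⟨D', ?_, ?_⟩
  · calc _ ≤ _ := Set.ncard_union_le _ _
      _ ≤ k + Kᶜ.card := by
        gcongr
        · exact le_trans (Set.ncard_image_le Dhat.toFinite) hk
        · rw [← Set.image_univ]
          refine le_trans (Set.ncard_image_le (Set.finite_univ)) ?_
          rw [Set.ncard_univ, Nat.card_eq_fintype_card, Fintype.card_coe]
  · intro x
    rcases hseg : seg x with - | o
    · -- x is a base vertex
      obtain hx := eq_of_seg_none hseg
      set v := base x with hv
      rw [hx]
      by_cases hvK : v ∈ K
      · obtain ⟨y₀, hy₀⟩ := Set.ncard_eq_one.mp (hK v hvK)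
        have hy₀mem : y₀ ∈ {y : V | ∃ w : Ghat.Walk y v, w.length ≤ r} ∩ Dhat := by
          rw [hy₀]; rfl
        have hclaim : {y | ∃ w : (Ghat.attachPendants Kᶜ (2 * r)).Walk y
            (Sum.inl (Sum.inl v)), w.length ≤ r} ∩ D' = {Sum.inl (Sum.inl y₀)} := by
          ext z
          simp only [Set.mem_inter_iff, Set.mem_singleton_iff, Set.mem_setOf_eq, hmemD']
          constructor
          · rintro ⟨hw, ⟨y, hy, rfl⟩ | ⟨o, rfl⟩⟩
            · obtain ⟨q, hq⟩ := mem_base_base.mp hw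
              have : y ∈ {y : V | ∃ w : Ghat.Walk y v, w.length ≤ r} ∩ Dhat :=
                ⟨⟨q, hq⟩, hy⟩
              rw [hy₀] at this
              rw [this]
            · obtain ⟨q, hq⟩ := (mem_pvert_base hr (hm_pos o) (hm_le o)).mp hw
              have h1 := hm_ge o
              have hq0 : q.length = 0 := by omega
              have : o.1 = v := q.eq_of_length_eq_zero hq0
              exact absurd (this ▸ Finset.mem_compl.mp o.2) (fun h => h hvK)
          · rintro rfl
            exact ⟨mem_base_base.mpr hy₀mem.1, Or.inl ⟨y₀, hy₀mem.2, rfl⟩⟩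
        rw [hclaim, Set.ncard_singleton]
      · have hv' : v ∈ Kᶜ := Finset.mem_compl.mpr hvK
        set ov : {o : V // o ∈ Kᶜ} := ⟨v, hv'⟩ with hov
        by_cases hcov : r ∈ T ov
        · obtain ⟨y₀, hy₀D, q₀, hq₀⟩ := hcov
          have hcov' : r ∈ T ov := ⟨y₀, hy₀D, q₀, hq₀⟩
          have hclaim : {y | ∃ w : (Ghat.attachPendants Kᶜ (2 * r)).Walk y
              (Sum.inl (Sum.inl v)), w.length ≤ r} ∩ D' = {Sum.inl (Sum.inl y₀)} := by
            ext z
            simp only [Set.mem_inter_iff, Set.mem_singleton_iff, Set.mem_setOf_eq, hmemD']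
            constructor
            · rintro ⟨hw, ⟨y, hy, rfl⟩ | ⟨o, rfl⟩⟩
              · obtain ⟨q, hq⟩ := mem_base_base.mp hw
                have heq : y = y₀ := by
                  have h1 : y ∈ {y : V | ∃ w : Ghat.Walk y v, w.length ≤ r} ∩ Dhat :=
                    ⟨⟨q, hq⟩, hy⟩
                  have h2 : y₀ ∈ {y : V | ∃ w : Ghat.Walk y v, w.length ≤ r} ∩ Dhat :=
                    ⟨⟨q₀, hq₀⟩, hy₀D⟩
                  exact (Set.ncard_le_one (Set.toFinite _)).mp (hO v hv') _ h1 _ h2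
                rw [heq]
              · obtain ⟨q, hq⟩ := (mem_pvert_base hr (hm_pos o) (hm_le o)).mp hw
                have h1 := hm_ge o
                have hq0 : q.length = 0 := by omega
                have hmo : m o = r := by omega
                have hbase : o.1 = v := q.eq_of_length_eq_zero hq0
                have hoov : o = ov := Subtype.ext hbase
                rw [hoov] at hmo
                have h2 := ht_pos ov hcov'
                have h3 := ht_le ov hcov'
                rw [hm] at hmo
                simp only [if_pos hcov'] at hmo
                omega
            · rintro rfl
              exact ⟨mem_base_base.mpr ⟨q₀, hq₀⟩, Or.inl ⟨y₀, hy₀D, rfl⟩⟩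
          rw [hclaim, Set.ncard_singleton]
        · have hmov : m ov = r := by rw [hm]; simp only [if_neg hcov]
          have hclaim : {y | ∃ w : (Ghat.attachPendants Kᶜ (2 * r)).Walk y
              (Sum.inl (Sum.inl v)), w.length ≤ r} ∩ D' = {(pvert ov r : VT V Kᶜ r)} := by
            ext z
            simp only [Set.mem_inter_iff, Set.mem_singleton_iff, Set.mem_setOf_eq, hmemD']
            constructor
            · rintro ⟨hw, ⟨y, hy, rfl⟩ | ⟨o, rfl⟩⟩
              · obtain ⟨q, hq⟩ := mem_base_base.mp hw
                exact absurd ⟨y, hy, q, hq⟩ hcov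
              · obtain ⟨q, hq⟩ := (mem_pvert_base hr (hm_pos o) (hm_le o)).mp hw
                have h1 := hm_ge o
                have hq0 : q.length = 0 := by omega
                have hmo : m o = r := by omega
                have hbase : o.1 = v := q.eq_of_length_eq_zero hq0
                have hoov : o = ov := Subtype.ext hbase
                rw [hoov, hmov]
            · rintro rfl
              refine ⟨(mem_pvert_base hr hr (by omega)).mpr
                ⟨SimpleGraph.Walk.nil, by simp⟩, Or.inr ⟨ov, by rw [hmov]⟩⟩
          rw [hclaim, Set.ncard_singleton]
    · -- x is a pendant vertex
      obtain hx := eq_pvert_of_seg hr hseg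
      have he1 : 1 ≤ depth x := depth_pos_of_seg hr hseg
      have he : depth x ≤ 2 * r := depth_le
      rw [hx]
      generalize hE : depth x = e at he1 he ⊢
      by_cases hP : ∃ y ∈ Dhat, ∃ q : Ghat.Walk y o.1, q.length + e ≤ r
      · obtain ⟨y₀, hy₀D, q₀, hq₀⟩ := hP
        have hcov : r ∈ T o := ⟨y₀, hy₀D, q₀, by omega⟩
        have htle : t o ≤ r - e := Nat.sInf_le ⟨y₀, hy₀D, q₀, by omega⟩
        have htpos := ht_pos o hcov
        have hmo : m o = 2 * r + 1 - t o := by rw [hm]; simp only [if_pos hcov]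
        have hclaim : {y | ∃ w : (Ghat.attachPendants Kᶜ (2 * r)).Walk y
            (pvert o e), w.length ≤ r} ∩ D' = {Sum.inl (Sum.inl y₀)} := by
          ext z
          simp only [Set.mem_inter_iff, Set.mem_singleton_iff, Set.mem_setOf_eq, hmemD']
          constructor
          · rintro ⟨hw, ⟨y, hy, rfl⟩ | ⟨o', rfl⟩⟩
            · obtain ⟨q, hq⟩ := (mem_base_pvert hr he1 he).mp hw
              have heq : y = y₀ := by
                have h1 : y ∈ {y : V | ∃ w : Ghat.Walk y o.1, w.length ≤ r} ∩ Dhat :=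
                  ⟨⟨q, by omega⟩, hy⟩
                have h2 : y₀ ∈ {y : V | ∃ w : Ghat.Walk y o.1, w.length ≤ r} ∩ Dhat :=
                  ⟨⟨q₀, by omega⟩, hy₀D⟩
                exact (Set.ncard_le_one (Set.toFinite _)).mp (hO o.1 o.2) _ h1 _ h2
              rw [heq]
            · by_cases hoo : o' = o
              · subst hoo
                have hmm := (mem_pvert_pvert hr (hm_pos o') (hm_le o') he1 he).mp hw
                omega
              · obtain ⟨q, hq⟩ := mem_pvert_pvert_cross hr hoo
                  (hm_pos o') (hm_le o') he1 he hw
                have := hm_ge o'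
                omega
          · rintro rfl
            exact ⟨(mem_base_pvert hr he1 he).mpr ⟨q₀, hq₀⟩, Or.inl ⟨y₀, hy₀D, rfl⟩⟩
        rw [hclaim, Set.ncard_singleton]
      · have hmm : max (m o) e - min (m o) e ≤ r := by
          by_cases hcov : r ∈ T o
          · have h1 := ht_pos o hcov
            have h2 := ht_le o hcov
            have h3 : ¬ (t o ≤ r - e) := by
              intro hcon
              obtain ⟨y, hy, q, hq⟩ := Nat.sInf_mem (⟨r, hcov⟩ : (T o).Nonempty)
              have hts : sInf (T o) = t o := rfl
              exact hP ⟨y, hy, q, by omega⟩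
            have hmo : m o = 2 * r + 1 - t o := by rw [hm]; simp only [if_pos hcov]
            omega
          · have hmo : m o = r := by rw [hm]; simp only [if_neg hcov]
            omega
        have hclaim : {y | ∃ w : (Ghat.attachPendants Kᶜ (2 * r)).Walk y
            (pvert o e), w.length ≤ r} ∩ D' = {(pvert o (m o) : VT V Kᶜ r)} := by
          ext z
          simp only [Set.mem_inter_iff, Set.mem_singleton_iff, Set.mem_setOf_eq, hmemD']
          constructor
          · rintro ⟨hw, ⟨y, hy, rfl⟩ | ⟨o', rfl⟩⟩
            · obtain ⟨q, hq⟩ := (mem_base_pvert hr he1 he).mp hw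
              exact absurd ⟨y, hy, q, hq⟩ hP
            · by_cases hoo : o' = o
              · rw [hoo]
              · obtain ⟨q, hq⟩ := mem_pvert_pvert_cross hr hoo
                  (hm_pos o') (hm_le o') he1 he hw
                have := hm_ge o'
                omega
          · rintro rfl
            exact ⟨(mem_pvert_pvert hr (hm_pos o) (hm_le o) he1 he).mpr hmm,
              Or.inr ⟨o, rfl⟩⟩
        rw [hclaim, Set.ncard_singleton]

end PCaux

namespace PCaux
variable {V : Type*} [Fintype V] [DecidableEq V]

lemma forward_dir (Ghat : SimpleGraph V) (K : Finset V) (r k : ℕ) (hr : 1 ≤ r)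
    (D' : Set (VT V Kᶜ r)) (hsize : D'.ncard ≤ k + Kᶜ.card)
    (hcode : ∀ x, ({y | ∃ w : (Ghat.attachPendants Kᶜ (2 * r)).Walk y x,
                    w.length ≤ r} ∩ D').ncard = 1) :
    (∃ Dhat : Set V, Dhat ⊆ (K : Set V) ∧ Dhat.ncard ≤ k ∧
        (∀ v ∈ K, ({y : V | ∃ w : Ghat.Walk y v, w.length ≤ r} ∩ Dhat).ncard = 1) ∧
        (∀ v ∈ Kᶜ, ({y : V | ∃ w : Ghat.Walk y v, w.length ≤ r} ∩ Dhat).ncard ≤ 1)) := by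
  classical
  have H : ∀ o : {o : V // o ∈ Kᶜ}, ∃ a,
      {y | ∃ w : (Ghat.attachPendants Kᶜ (2 * r)).Walk y (pvert o (2 * r)),
        w.length ≤ r} ∩ D' = {a} :=
    fun o => Set.ncard_eq_one.mp (hcode _)
  choose c hc using H
  have hcmem : ∀ o, c o ∈
      {y | ∃ w : (Ghat.attachPendants Kᶜ (2 * r)).Walk y (pvert o (2 * r)),
        w.length ≤ r} ∩ D' := by
    intro o; rw [hc o]; rfl
  have hcD : ∀ o, c o ∈ D' := fun o => (hcmem o).2
  have hc2 : ∀ o, seg (c o) = some o ∧ r ≤ depth (c o) := by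
    intro o
    obtain ⟨hw, -⟩ := hcmem o
    rcases hsz : seg (c o) with - | o'
    · exfalso
      rw [eq_of_seg_none hsz] at hw
      obtain ⟨q, hq⟩ := (mem_base_pvert hr (by omega) (le_refl _)).mp hw
      omega
    · have hx := eq_pvert_of_seg hr hsz
      have hd1 : 1 ≤ depth (c o) := depth_pos_of_seg hr hsz
      have hd2 : depth (c o) ≤ 2 * r := depth_le
      rw [hx] at hw
      by_cases hoo : o' = o
      · subst hoo
        have := (mem_pvert_pvert hr hd1 hd2 (by omega) (le_refl _)).mp hw
        exact ⟨rfl, by omega⟩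
      · obtain ⟨q, hq⟩ := mem_pvert_pvert_cross hr hoo hd1 hd2 (by omega) (le_refl _) hw
        omega
  -- uniqueness of the code vertex on each pendant path
  have huniq : ∀ z ∈ D', ∀ o, seg z = some o → z = c o := by
    intro z hz o hsz
    obtain ⟨hso, hdo⟩ := hc2 o
    have hxz := eq_pvert_of_seg hr hsz
    have hxc := eq_pvert_of_seg hr hso
    have hdz1 : 1 ≤ depth z := depth_pos_of_seg hr hsz
    have hdz2 : depth z ≤ 2 * r := depth_le
    have hdc2 : depth (c o) ≤ 2 * r := depth_le
    set p := (depth z + depth (c o)) / 2 with hp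
    have hp1 : 1 ≤ p := by omega
    have hp2 : p ≤ 2 * r := by omega
    obtain ⟨a, ha⟩ := Set.ncard_eq_one.mp (hcode (pvert o p))
    have hza : z ∈ {y | ∃ w : (Ghat.attachPendants Kᶜ (2 * r)).Walk y (pvert o p),
        w.length ≤ r} ∩ D' := by
      refine ⟨?_, hz⟩
      rw [hxz]
      exact (mem_pvert_pvert hr hdz1 hdz2 hp1 hp2).mpr (by omega)
    have hca : c o ∈ {y | ∃ w : (Ghat.attachPendants Kᶜ (2 * r)).Walk y (pvert o p),
        w.length ≤ r} ∩ D' := by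
      refine ⟨?_, hcD o⟩
      rw [hxc]
      exact (mem_pvert_pvert hr (by omega) hdc2 hp1 hp2).mpr (by omega)
    rw [ha] at hza hca
    exact hza.trans hca.symm
  -- no base vertex of `O` is in the code
  have hnotbase : ∀ o : {o : V // o ∈ Kᶜ}, (Sum.inl (Sum.inl o.1) : VT V Kᶜ r) ∉ D' := by
    intro o hmem
    obtain ⟨hso, hdo⟩ := hc2 o
    have hxc := eq_pvert_of_seg hr hso
    have hdc2 : depth (c o) ≤ 2 * r := depth_le
    have hne : (Sum.inl (Sum.inl o.1) : VT V Kᶜ r) ≠ c o := by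
      intro hcon
      have := congrArg seg hcon
      rw [hso] at this
      simp [seg] at this
    rcases Nat.eq_zero_or_pos (depth (c o) - r) with hp | hp
    · obtain ⟨a, ha⟩ := Set.ncard_eq_one.mp (hcode (Sum.inl (Sum.inl o.1)))
      have h1 : (Sum.inl (Sum.inl o.1) : VT V Kᶜ r) ∈
          {y | ∃ w : (Ghat.attachPendants Kᶜ (2 * r)).Walk y (Sum.inl (Sum.inl o.1)),
            w.length ≤ r} ∩ D' := ⟨⟨SimpleGraph.Walk.nil, by simp⟩, hmem⟩
      have h2 : c o ∈
          {y | ∃ w : (Ghat.attachPendants Kᶜ (2 * r)).Walk y (Sum.inl (Sum.inl o.1)),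
            w.length ≤ r} ∩ D' := by
        refine ⟨?_, hcD o⟩
        rw [hxc]
        exact (mem_pvert_base hr (by omega) hdc2).mpr ⟨SimpleGraph.Walk.nil, by simp; omega⟩
      rw [ha] at h1 h2
      exact hne (h1.trans h2.symm)
    · set p := depth (c o) - r with hp'
      obtain ⟨a, ha⟩ := Set.ncard_eq_one.mp (hcode (pvert o p))
      have h1 : (Sum.inl (Sum.inl o.1) : VT V Kᶜ r) ∈
          {y | ∃ w : (Ghat.attachPendants Kᶜ (2 * r)).Walk y (pvert o p),
            w.length ≤ r} ∩ D' := by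
        refine ⟨?_, hmem⟩
        exact (mem_base_pvert hr (by omega) (by omega)).mpr ⟨SimpleGraph.Walk.nil, by simp; omega⟩
      have h2 : c o ∈ {y | ∃ w : (Ghat.attachPendants Kᶜ (2 * r)).Walk y (pvert o p),
            w.length ≤ r} ∩ D' := by
        refine ⟨?_, hcD o⟩
        rw [hxc]
        exact (mem_pvert_pvert hr (by omega) hdc2 (by omega) (by omega)).mpr (by omega)
      rw [ha] at h1 h2
      exact hne (h1.trans h2.symm)
  -- the kernel code
  set Dhat : Set V := {v | (Sum.inl (Sum.inl v) : VT V Kᶜ r) ∈ D'} with hDhat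
  have hsubK : Dhat ⊆ (K : Set V) := by
    intro v hv
    by_contra hvK
    exact hnotbase ⟨v, Finset.mem_compl.mpr hvK⟩ hv
  have hinj : Function.Injective (fun v : V => (Sum.inl (Sum.inl v) : VT V Kᶜ r)) := by
    intro a b h; simpa using h
  have hcinj : Function.Injective c := by
    intro a b h
    have := congrArg seg h
    rw [(hc2 a).1, (hc2 b).1] at this
    exact Option.some_inj.mp this
  have hdecomp : D' = ((fun v : V => (Sum.inl (Sum.inl v) : VT V Kᶜ r)) '' Dhat) ∪
      Set.range c := by
    ext z
    constructor
    · intro hz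
      rcases hsz : seg z with - | o
      · left
        exact ⟨base z, by rw [hDhat, Set.mem_setOf_eq, ← eq_of_seg_none hsz]; exact hz,
          (eq_of_seg_none hsz).symm⟩
      · exact Or.inr ⟨o, (huniq z hz o hsz).symm⟩
    · rintro (⟨y, hy, rfl⟩ | ⟨o, rfl⟩)
      · exact hy
      · exact hcD o
  have hdisj : Disjoint ((fun v : V => (Sum.inl (Sum.inl v) : VT V Kᶜ r)) '' Dhat)
      (Set.range c) := by
    rw [Set.disjoint_left]
    rintro z ⟨y, hy, rfl⟩ ⟨o, hco⟩
    have := congrArg seg hco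
    rw [(hc2 o).1] at this
    simp [seg] at this
  have hkbound : Dhat.ncard ≤ k := by
    rw [hdecomp] at hsize
    rw [Set.ncard_union_eq hdisj (Set.toFinite _) (Set.toFinite _)] at hsize
    rw [Set.ncard_image_of_injective _ hinj] at hsize
    have hrange : (Set.range c).ncard = Kᶜ.card := by
      rw [← Set.image_univ, Set.ncard_image_of_injective _ hcinj, Set.ncard_univ,
        Nat.card_eq_fintype_card, Fintype.card_coe]
    omega
  refine ⟨Dhat, hsubK, hkbound, ?_, ?_⟩
  · intro v hvK
    have him : (fun y : V => (Sum.inl (Sum.inl y) : VT V Kᶜ r)) ''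
        ({y : V | ∃ w : Ghat.Walk y v, w.length ≤ r} ∩ Dhat) =
        {y | ∃ w : (Ghat.attachPendants Kᶜ (2 * r)).Walk y (Sum.inl (Sum.inl v)),
          w.length ≤ r} ∩ D' := by
      ext z
      constructor
      · rintro ⟨y, ⟨⟨q, hq⟩, hy⟩, rfl⟩
        exact ⟨mem_base_base.mpr ⟨q, hq⟩, hy⟩
      · rintro ⟨hw, hz⟩
        rcases hsz : seg z with - | o
        · rw [eq_of_seg_none hsz] at hw ⊢
          obtain ⟨q, hq⟩ := mem_base_base.mp hw
          rw [eq_of_seg_none hsz] at hz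
          exact ⟨base z, ⟨⟨q, hq⟩, hz⟩, rfl⟩
        · exfalso
          obtain ⟨hso, hdo⟩ := hc2 o
          rw [huniq z hz o hsz, eq_pvert_of_seg hr hso] at hw
          obtain ⟨q, hq⟩ := (mem_pvert_base hr (by omega) depth_le).mp hw
          have hq0 : q.length = 0 := by omega
          have : o.1 = v := q.eq_of_length_eq_zero hq0
          exact Finset.mem_compl.mp o.2 (this ▸ hvK)
    have := hcode (Sum.inl (Sum.inl v))
    rw [← him, Set.ncard_image_of_injective _ hinj] at this
    exact this
  · intro v hvO
    have hsub : (fun y : V => (Sum.inl (Sum.inl y) : VT V Kᶜ r)) ''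
        ({y : V | ∃ w : Ghat.Walk y v, w.length ≤ r} ∩ Dhat) ⊆
        {y | ∃ w : (Ghat.attachPendants Kᶜ (2 * r)).Walk y (Sum.inl (Sum.inl v)),
          w.length ≤ r} ∩ D' := by
      rintro z ⟨y, ⟨⟨q, hq⟩, hy⟩, rfl⟩
      exact ⟨mem_base_base.mpr ⟨q, hq⟩, hy⟩
    have hb := Set.ncard_le_ncard hsub (Set.toFinite _)
    rw [Set.ncard_image_of_injective _ hinj, hcode (Sum.inl (Sum.inl v))] at hb
    exact hb

end PCaux

/-- Let `G'` be obtained from `Ĝ` by attaching to every vertex of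
`O = V(Ĝ) ∖ K` a pendant path of `2r` new vertices.  Then `G'` has an `r`-perfect code
of size at most `k + |O|` iff `Ĝ` has a set `D̂ ⊆ K` of size at most `k` with
`|N^r_Ĝ[v] ∩ D̂| = 1` for every `v ∈ K` and `|N^r_Ĝ[v] ∩ D̂| ≤ 1` for every `v ∈ O`. -/
theorem perfect_code_kernel_back {V : Type*} [Fintype V] [DecidableEq V]
    (Ghat : SimpleGraph V) (K : Finset V) (r k : ℕ) (hr : 1 ≤ r) :
    (∃ D' : Set ((V ⊕ {o : V // o ∈ Kᶜ}) ⊕ (Σ _p : {o : V // o ∈ Kᶜ}, Fin (2 * r - 1))),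
        D'.ncard ≤ k + Kᶜ.card ∧
        ∀ x, ({y | ∃ w : (Ghat.attachPendants Kᶜ (2 * r)).Walk y x,
                    w.length ≤ r} ∩ D').ncard = 1) ↔
    (∃ Dhat : Set V, Dhat ⊆ (K : Set V) ∧ Dhat.ncard ≤ k ∧
        (∀ v ∈ K, ({y : V | ∃ w : Ghat.Walk y v, w.length ≤ r} ∩ Dhat).ncard = 1) ∧
        (∀ v ∈ Kᶜ, ({y : V | ∃ w : Ghat.Walk y v, w.length ≤ r} ∩ Dhat).ncard ≤ 1)) := by
  constructor
  · rintro ⟨D', h1, h2⟩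
    exact PCaux.forward_dir Ghat K r k hr D' h1 h2
  · rintro ⟨Dhat, h1, h2, h3, h4⟩
    exact PCaux.backward_dir Ghat K r k hr Dhat h1 h2 h3 h4
end

section
/- Let Ĝ be a finite simple graph, K ⊆ V(Ĝ), O = V(Ĝ) ∖ K, r ≥ 1 and m ≥ 1 natural numbers, and set σ = m·(2r+1). Let G' be obtained from Ĝ by attaching to every vertex v ∈ O a pendant path of σ−1 new vertices. Then the minimum size of an r-dominating set of G' equals m·|O| plus the minimum size of a set D ⊆ V(Ĝ) with N^r_{Ĝ}[v] ∩ D ≠ ∅ for every v ∈ K. -/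
namespace DomPf
open SimpleGraph

variable {V : Type*} [Fintype V] [DecidableEq V]

abbrev VG (K : Finset V) (σ : ℕ) :=
  (V ⊕ {o : V // o ∈ Kᶜ}) ⊕ (Σ _p : {o : V // o ∈ Kᶜ}, Fin (σ - 1 - 1))

def dep {K : Finset V} {σ : ℕ} : VG K σ → ℕ
  | .inl (.inl _) => 0
  | .inl (.inr _) => σ - 1
  | .inr ⟨_, i⟩ => (i : ℕ) + 1

def ow {K : Finset V} {σ : ℕ} : VG K σ → Option {o : V // o ∈ Kᶜ}
  | .inl (.inl _) => none
  | .inl (.inr o) => some o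
  | .inr ⟨o, _⟩ => some o

def pr {K : Finset V} {σ : ℕ} : VG K σ → V
  | .inl (.inl u) => u
  | .inl (.inr o) => o.1
  | .inr ⟨o, _⟩ => o.1

def cf {K : Finset V} {σ : ℕ} (o : {o : V // o ∈ Kᶜ}) (z : VG K σ) : ℕ :=
  if ow z = some o then dep z else 0

def pos {K : Finset V} (σ : ℕ) (o : {o : V // o ∈ Kᶜ}) (d : ℕ) : VG K σ :=
  if h0 : d = 0 then .inl (.inl o.1)
  else if h : d < σ - 1 then .inr ⟨o, ⟨d - 1, by omega⟩⟩
  else .inl (.inr o)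

lemma dep_pos {K : Finset V} {σ : ℕ} (o : {o : V // o ∈ Kᶜ}) {d : ℕ} (hd : d ≤ σ - 1) :
    dep (pos (K := K) σ o d) = d := by
  unfold pos
  split
  · simp [dep]; omega
  · split
    · simp [dep]; omega
    · simp [dep]; omega

lemma ow_pos {K : Finset V} {σ : ℕ} (o : {o : V // o ∈ Kᶜ}) {d : ℕ} (hd : 1 ≤ d) :
    ow (pos (K := K) σ o d) = some o := by
  unfold pos
  split
  · omega
  · split <;> simp [ow]

lemma pr_pos {K : Finset V} {σ : ℕ} (o : {o : V // o ∈ Kᶜ}) (d : ℕ) :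
    pr (pos (K := K) σ o d) = o.1 := by
  unfold pos
  split
  · rfl
  · split <;> rfl

lemma cf_pos {K : Finset V} {σ : ℕ} (o : {o : V // o ∈ Kᶜ}) {d : ℕ} (hd : d ≤ σ - 1) :
    cf o (pos (K := K) σ o d) = d := by
  rcases Nat.eq_zero_or_pos d with h | h
  · subst h; unfold cf pos; simp [ow]
  · rw [cf, if_pos (ow_pos o h), dep_pos o hd]

lemma cf_ge_one {K : Finset V} {σ : ℕ} {o : {o : V // o ∈ Kᶜ}} {z : VG K σ}
    (h : 1 ≤ cf o z) : ow z = some o ∧ cf o z = dep z := by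
  by_cases h' : ow z = some o
  · exact ⟨h', by rw [cf, if_pos h']⟩
  · rw [cf, if_neg h'] at h; omega

lemma vert_cases {K : Finset V} {σ : ℕ} (hσ : 3 ≤ σ) (z : VG K σ) :
    (∃ u, z = .inl (.inl u)) ∨
    ∃ o d, 1 ≤ d ∧ d ≤ σ - 1 ∧ z = pos σ o d := by
  rcases z with (u | o) | ⟨o, i⟩
  · exact Or.inl ⟨u, rfl⟩
  · refine Or.inr ⟨o, σ - 1, by omega, le_refl _, ?_⟩
    unfold pos
    rw [dif_neg (by omega), dif_neg (by omega)]
  · refine Or.inr ⟨o, (i : ℕ) + 1, by omega, by omega, ?_⟩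
    have hi := i.2
    unfold pos
    rw [dif_neg (by omega), dif_pos (by omega)]
    have : (⟨(i : ℕ) + 1 - 1, by omega⟩ : Fin (σ - 1 - 1)) = i := Fin.ext (by simp)
    rw [this]

lemma pos_zero {K : Finset V} {σ : ℕ} (o : {o : V // o ∈ Kᶜ}) :
    pos (K := K) σ o 0 = .inl (.inl o.1) := rfl

lemma lip {W : Type*} {G : SimpleGraph W} {f : W → ℕ}
    (hf : ∀ ⦃a b : W⦄, G.Adj a b → f a ≤ f b + 1) :
    ∀ {x y : W} (w : G.Walk x y), f x ≤ f y + w.length := by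
  intro x y w
  induction w with
  | nil => simp
  | cons h p ih =>
    have := hf h
    simp only [SimpleGraph.Walk.length_cons]
    omega

@[simp] lemma dep_a {K : Finset V} {σ : ℕ} (u : V) :
    dep (K := K) (σ := σ) (.inl (.inl u)) = 0 := rfl
@[simp] lemma dep_b {K : Finset V} {σ : ℕ} (o : {o : V // o ∈ Kᶜ}) :
    dep (K := K) (σ := σ) (.inl (.inr o)) = σ - 1 := rfl
@[simp] lemma dep_c {K : Finset V} {σ : ℕ} (o : {o : V // o ∈ Kᶜ}) (i : Fin (σ - 1 - 1)) :
    dep (K := K) (σ := σ) (.inr ⟨o, i⟩) = (i : ℕ) + 1 := rfl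
@[simp] lemma ow_a {K : Finset V} {σ : ℕ} (u : V) :
    ow (K := K) (σ := σ) (.inl (.inl u)) = none := rfl
@[simp] lemma ow_b {K : Finset V} {σ : ℕ} (o : {o : V // o ∈ Kᶜ}) :
    ow (K := K) (σ := σ) (.inl (.inr o)) = some o := rfl
@[simp] lemma ow_c {K : Finset V} {σ : ℕ} (o : {o : V // o ∈ Kᶜ}) (i : Fin (σ - 1 - 1)) :
    ow (K := K) (σ := σ) (.inr ⟨o, i⟩) = some o := rfl
@[simp] lemma pr_a {K : Finset V} {σ : ℕ} (u : V) :
    pr (K := K) (σ := σ) (.inl (.inl u)) = u := rfl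
@[simp] lemma pr_b {K : Finset V} {σ : ℕ} (o : {o : V // o ∈ Kᶜ}) :
    pr (K := K) (σ := σ) (.inl (.inr o)) = o.1 := rfl
@[simp] lemma pr_c {K : Finset V} {σ : ℕ} (o : {o : V // o ∈ Kᶜ}) (i : Fin (σ - 1 - 1)) :
    pr (K := K) (σ := σ) (.inr ⟨o, i⟩) = o.1 := rfl

lemma step {Ghat : SimpleGraph V} {K : Finset V} {σ : ℕ} (hσ : 3 ≤ σ)
    {x y : VG K σ} (h : (Ghat.attachPendants Kᶜ (σ - 1)).Adj x y) :
    dep x ≤ dep y + 1 ∧ (∀ o, cf o x ≤ cf o y + 1) ∧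
      (pr x = pr y ∨ (Ghat.Adj (pr x) (pr y) ∧ dep x = 0 ∧ dep y = 0)) := by
  rw [SimpleGraph.attachPendants, SimpleGraph.addPaths, SimpleGraph.fromRel_adj] at h
  obtain ⟨hne, h | h⟩ := h <;>
  · rcases h with ⟨u, w, huw, rfl, rfl⟩ | ⟨p, hp, _, _⟩ | ⟨p, i, hi, rfl, rfl⟩ |
      ⟨p, i, j, hij, rfl, rfl⟩ | ⟨p, i, hi, rfl, rfl⟩
    · exact ⟨by simp, fun o => by simp [cf],
        Or.inr ⟨by first | exact huw | exact huw.symm, rfl, rfl⟩⟩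
    · exact absurd hp (by omega)
    · refine ⟨by simp <;> omega, fun o => ?_, Or.inl rfl⟩
      simp only [cf, ow_a, ow_b, ow_c, dep_a, dep_b, dep_c]
      by_cases hpo : p = o <;> simp [hpo] <;> omega
    · have hi2 := i.2
      have hj2 := j.2
      refine ⟨by simp; omega, fun o => ?_, Or.inl rfl⟩
      simp only [cf, ow_a, ow_b, ow_c, dep_a, dep_b, dep_c]
      by_cases hpo : p = o <;> simp [hpo] <;> omega
    · have hi2 := i.2
      refine ⟨by simp; omega, fun o => ?_, Or.inl rfl⟩
      simp only [cf, ow_a, ow_b, ow_c, dep_a, dep_b, dep_c]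
      by_cases hpo : p = o <;> simp [hpo] <;> omega

lemma proj_aux {Ghat : SimpleGraph V} {K : Finset V} {σ : ℕ} (hσ : 3 ≤ σ)
    {x y : VG K σ}
    (w : (Ghat.attachPendants Kᶜ (σ - 1)).Walk x y) :
    ∀ u : V, y = .inl (.inl u) →
      ∃ q : Ghat.Walk (pr x) u, q.length + dep x ≤ w.length := by
  induction w with
  | nil =>
    rintro u rfl
    exact ⟨SimpleGraph.Walk.nil, by simp⟩
  | @cons a b c hadj w ih =>
    rintro u rfl
    obtain ⟨q, hq⟩ := ih u rfl
    obtain ⟨hdep, -, hpr | ⟨hadj', ha, hb⟩⟩ := step hσ hadj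
    · exact ⟨q.copy hpr.symm rfl, by simp only [SimpleGraph.Walk.length_copy,
        SimpleGraph.Walk.length_cons]; omega⟩
    · refine ⟨SimpleGraph.Walk.cons hadj' q, ?_⟩
      simp only [SimpleGraph.Walk.length_cons]
      omega

lemma proj {Ghat : SimpleGraph V} {K : Finset V} {σ : ℕ} (hσ : 3 ≤ σ)
    {x : VG K σ} {u : V}
    (w : (Ghat.attachPendants Kᶜ (σ - 1)).Walk x (.inl (.inl u))) :
    ∃ q : Ghat.Walk (pr x) u, q.length + dep x ≤ w.length :=
  proj_aux hσ w u rfl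

def emb (Ghat : SimpleGraph V) (K : Finset V) (σ : ℕ) :
    Ghat →g Ghat.attachPendants Kᶜ (σ - 1) where
  toFun u := .inl (.inl u)
  map_rel' := by
    intro a b hab
    rw [SimpleGraph.attachPendants, SimpleGraph.addPaths, SimpleGraph.fromRel_adj]
    exact ⟨by simp [hab.ne], Or.inl (Or.inl ⟨a, b, hab, rfl, rfl⟩)⟩

lemma pos_adj (Ghat : SimpleGraph V) {K : Finset V} {σ : ℕ} (hσ : 3 ≤ σ)
    (o : {o : V // o ∈ Kᶜ}) {d : ℕ} (hd : d + 1 ≤ σ - 1) :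
    (Ghat.attachPendants Kᶜ (σ - 1)).Adj (pos σ o d) (pos σ o (d + 1)) := by
  rw [SimpleGraph.attachPendants, SimpleGraph.addPaths, SimpleGraph.fromRel_adj]
  by_cases h0 : d = 0
  · subst h0
    rw [show pos (K := K) σ o 0 = .inl (.inl o.1) from rfl]
    rw [pos, dif_neg (by omega), dif_pos (by omega)]
    refine ⟨by simp, Or.inl (Or.inr (Or.inr (Or.inl ⟨o, ⟨0, by omega⟩, rfl, rfl, rfl⟩)))⟩
  · rw [pos, dif_neg h0, dif_pos (by omega), pos]
    by_cases h1 : d + 1 < σ - 1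
    · rw [dif_neg (by omega), dif_pos h1]
      refine ⟨?_, Or.inl (Or.inr (Or.inr (Or.inr (Or.inl
        ⟨o, ⟨d - 1, by omega⟩, ⟨d, by omega⟩, by simp; omega, rfl, rfl⟩))))⟩
      simp only [ne_eq, Sum.inr.injEq, Sigma.mk.inj_iff, heq_eq_eq, Fin.mk.injEq]
      omega
    · rw [dif_neg (by omega), dif_neg (by omega)]
      refine ⟨by simp, Or.inl (Or.inr (Or.inr (Or.inr (Or.inr
        ⟨o, ⟨d - 1, by omega⟩, by simp; omega, rfl, rfl⟩))))⟩

lemma pos_walk_aux (Ghat : SimpleGraph V) {K : Finset V} {σ : ℕ} (hσ : 3 ≤ σ)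
    (o : {o : V // o ∈ Kᶜ}) :
    ∀ (k a : ℕ), a + k ≤ σ - 1 →
      ∃ w : (Ghat.attachPendants Kᶜ (σ - 1)).Walk (pos σ o a) (pos σ o (a + k)),
        w.length = k := by
  intro k
  induction k with
  | zero => exact fun a _ => ⟨SimpleGraph.Walk.nil, rfl⟩
  | succ k ih =>
    intro a ha
    obtain ⟨w, hw⟩ := ih a (by omega)
    refine ⟨(w.concat (pos_adj Ghat hσ o (d := a + k) (by omega))).copy rfl (by ring_nf), ?_⟩
    simp [SimpleGraph.Walk.length_concat, hw]

lemma pos_walk (Ghat : SimpleGraph V) {K : Finset V} {σ : ℕ} (hσ : 3 ≤ σ)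
    (o : {o : V // o ∈ Kᶜ}) {a b : ℕ} (hab : a ≤ b) (hb : b ≤ σ - 1) :
    ∃ w : (Ghat.attachPendants Kᶜ (σ - 1)).Walk (pos σ o a) (pos σ o b),
      w.length = b - a := by
  obtain ⟨k, rfl⟩ := Nat.exists_eq_add_of_le hab
  simpa using pos_walk_aux Ghat hσ o k a hb

lemma upper (Ghat : SimpleGraph V) (K : Finset V) (r m : ℕ) (hr : 1 ≤ r) (hm : 1 ≤ m)
    {D : Set V} (hD : ∀ v ∈ K, ∃ d ∈ D, ∃ w : Ghat.Walk d v, w.length ≤ r) :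
    ∃ D' : Set (VG K (m * (2 * r + 1))),
      (∀ x, ∃ d ∈ D',
        ∃ w : (Ghat.attachPendants Kᶜ (m * (2 * r + 1) - 1)).Walk d x, w.length ≤ r) ∧
      D'.ncard ≤ D.ncard + m * Kᶜ.card := by
  classical
  set σ := m * (2 * r + 1) with hσdef
  have hσm : σ = (2 * r + 1) * m := by rw [hσdef, Nat.mul_comm]
  have hσ : 3 ≤ σ := by
    have : (2 * r + 1) * 1 ≤ (2 * r + 1) * m := Nat.mul_le_mul_left _ hm
    omega
  set P : Set (VG K σ) := (fun p : {o : V // o ∈ Kᶜ} × Fin m =>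
      pos σ p.1 (r + (2 * r + 1) * (p.2 : ℕ))) '' Set.univ with hP
  set D₁ : Set (VG K σ) := (fun u => (Sum.inl (Sum.inl u) : VG K σ)) '' D with hD₁
  have key : ∀ (o : {o : V // o ∈ Kᶜ}) (t : ℕ), t ≤ σ - 1 →
      ∃ d ∈ D₁ ∪ P,
        ∃ w : (Ghat.attachPendants Kᶜ (σ - 1)).Walk d (pos σ o t), w.length ≤ r := by
    intro o t ht
    set j := t / (2 * r + 1) with hjdef
    have hdm : (2 * r + 1) * j + t % (2 * r + 1) = t := Nat.div_add_mod t (2 * r + 1)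
    have hmod : t % (2 * r + 1) < 2 * r + 1 := Nat.mod_lt _ (by omega)
    have hjm : j < m := by
      rw [hjdef]
      rw [Nat.div_lt_iff_lt_mul (by omega)]
      omega
    have hmul : (2 * r + 1) * (j + 1) ≤ (2 * r + 1) * m := Nat.mul_le_mul_left _ (by omega)
    rw [Nat.mul_succ] at hmul
    set p := r + (2 * r + 1) * j with hpdef
    have hpb : p ≤ σ - 1 := by omega
    have hmem : pos σ o p ∈ D₁ ∪ P := Or.inr ⟨(o, ⟨j, hjm⟩), trivial, rfl⟩
    by_cases hc : t ≤ p
    · obtain ⟨w, hw⟩ := pos_walk Ghat hσ o hc hpb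
      exact ⟨pos σ o p, hmem, w.reverse, by rw [SimpleGraph.Walk.length_reverse, hw]; omega⟩
    · obtain ⟨w, hw⟩ := pos_walk Ghat hσ o (le_of_not_ge hc) ht
      exact ⟨pos σ o p, hmem, w, by rw [hw]; omega⟩
  refine ⟨D₁ ∪ P, ?_, ?_⟩
  · intro x
    rcases vert_cases hσ x with ⟨u, rfl⟩ | ⟨o, d, hd1, hd2, rfl⟩
    · by_cases hu : u ∈ K
      · obtain ⟨dd, hdd, q, hq⟩ := hD u hu
        refine ⟨Sum.inl (Sum.inl dd), Or.inl ⟨dd, hdd, rfl⟩, q.map (emb Ghat K σ), ?_⟩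
        exact (SimpleGraph.Walk.length_map _ _).trans_le hq
      · have hu' : u ∈ Kᶜ := Finset.mem_compl.2 hu
        have := key ⟨u, hu'⟩ 0 (by omega)
        rw [pos_zero] at this
        exact this
    · exact key o d hd2
  · calc (D₁ ∪ P).ncard ≤ D₁.ncard + P.ncard := Set.ncard_union_le _ _
      _ ≤ D.ncard + m * Kᶜ.card := by
          have h1 : D₁.ncard ≤ D.ncard := Set.ncard_image_le (Set.toFinite _)
          have h2 : P.ncard ≤ (Set.univ : Set ({o : V // o ∈ Kᶜ} × Fin m)).ncard :=
            Set.ncard_image_le (Set.toFinite _)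
          rw [Set.ncard_univ, Nat.card_eq_fintype_card, Fintype.card_prod,
            Fintype.card_coe, Fintype.card_fin] at h2
          have : Kᶜ.card * m = m * Kᶜ.card := Nat.mul_comm _ _
          omega

lemma lower (Ghat : SimpleGraph V) (K : Finset V) (r m : ℕ) (hr : 1 ≤ r) (hm : 1 ≤ m)
    {D' : Set (VG K (m * (2 * r + 1)))}
    (hdom : ∀ x, ∃ d ∈ D',
      ∃ w : (Ghat.attachPendants Kᶜ (m * (2 * r + 1) - 1)).Walk d x, w.length ≤ r) :
    ∃ D : Set V, (∀ v ∈ K, ∃ d ∈ D, ∃ w : Ghat.Walk d v, w.length ≤ r) ∧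
      m * Kᶜ.card + D.ncard ≤ D'.ncard := by
  classical
  have hσm : m * (2 * r + 1) = (2 * r + 1) * m := Nat.mul_comm _ _
  have hσ : 3 ≤ m * (2 * r + 1) := by
    have : (2 * r + 1) * 1 ≤ (2 * r + 1) * m := Nat.mul_le_mul_left _ hm
    omega
  set Sh : {o : V // o ∈ Kᶜ} → Prop := fun o => ∃ z ∈ D', 1 ≤ cf o z ∧ cf o z < r with hShdef
  set D : Set V := {u | (Sum.inl (Sum.inl u) : VG K (m * (2 * r + 1))) ∈ D'} ∪
    (Subtype.val '' {o : {o : V // o ∈ Kᶜ} | Sh o}) with hDdef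
  have hKco : ∀ o : {o : V // o ∈ Kᶜ}, o.1 ∉ K := fun o => Finset.mem_compl.1 o.2
  -- D dominates K in Ghat
  have hDdom : ∀ v ∈ K, ∃ d ∈ D, ∃ w : Ghat.Walk d v, w.length ≤ r := by
    intro v hv
    obtain ⟨d, hd, w, hw⟩ := hdom (.inl (.inl v))
    obtain ⟨q, hq⟩ := proj hσ w
    have hpath : ∀ o : {o : V // o ∈ Kᶜ}, ow d = some o → o.1 ∈ D := by
      intro o how
      have hcf : cf o d = dep d := by rw [cf, if_pos how]
      have ht1 : 1 ≤ dep d := by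
        rcases d with (du | o') | ⟨o', i⟩
        · simp [ow] at how
        · simp; omega
        · simp
      have hprd : pr d = o.1 := by
        rcases d with (du | o') | ⟨o', i⟩
        · simp [ow] at how
        · simp [ow] at how; rw [how]; rfl
        · simp [ow] at how; rw [← how]; rfl
      have htr : dep d < r := by
        rcases Nat.lt_or_ge (dep d) r with h | h
        · exact h
        · exfalso
          have hq0 : q.length = 0 := by omega
          have := q.eq_of_length_eq_zero hq0
          rw [hprd] at this
          exact hKco o (this ▸ hv)
      have hSho : Sh o := by
        rw [hShdef]
        exact ⟨d, hd, by omega, by omega⟩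
      exact Or.inr ⟨o, hSho, rfl⟩
    rcases d with (du | o) | ⟨o, i⟩
    · exact ⟨du, Or.inl hd, q, by simp at hq; omega⟩
    · exact ⟨o.1, hpath o rfl, q, by simp at hq; omega⟩
    · exact ⟨o.1, hpath o rfl, q, by simp at hq; omega⟩
  refine ⟨D, hDdom, ?_⟩
  -- Counting
  set T : Finset (VG K (m * (2 * r + 1))) := D'.toFinset with hT
  set tf : {o : V // o ∈ Kᶜ} → ℕ := fun o => if h : Sh o then cf o h.choose else 0 with htf
  have htf_lt : ∀ o, tf o < r := by
    intro o
    simp only [htf]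
    split
    · rename_i h
      exact h.choose_spec.2.2
    · omega
  have hsel : ∀ (o : {o : V // o ∈ Kᶜ}) (j : Fin m), ∃ d ∈ D',
      tf o + 1 + (2 * r + 1) * (j : ℕ) ≤ cf o d ∧
      cf o d ≤ tf o + (2 * r + 1) * (j : ℕ) + 2 * r + 1 := by
    intro o j
    have hj : (j : ℕ) < m := j.2
    have hmul : (2 * r + 1) * ((j : ℕ) + 1) ≤ (2 * r + 1) * m := Nat.mul_le_mul_left _ (by omega)
    rw [Nat.mul_succ] at hmul
    set e := tf o + r + 1 + (2 * r + 1) * (j : ℕ) with he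
    have hel : e ≤ m * (2 * r + 1) - 1 := by have := htf_lt o; omega
    obtain ⟨d, hd, w, hw⟩ := hdom (pos (m * (2 * r + 1)) o e)
    have hf : ∀ ⦃a b : VG K (m * (2 * r + 1))⦄,
        (Ghat.attachPendants Kᶜ (m * (2 * r + 1) - 1)).Adj a b →
        cf o a ≤ cf o b + 1 := fun a b hab => (step hσ hab).2.1 o
    have l1 : cf o d ≤ cf o (pos (m * (2 * r + 1)) o e) + w.length := lip hf w
    have l2 : cf o (pos (m * (2 * r + 1)) o e) ≤ cf o d + w.length := by
      have := lip hf w.reverse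
      rwa [SimpleGraph.Walk.length_reverse] at this
    rw [cf_pos o hel] at l1 l2
    exact ⟨d, hd, by omega, by omega⟩
  choose dsel hdmem hdlb hdub using hsel
  set Fo : {o : V // o ∈ Kᶜ} → Finset (VG K (m * (2 * r + 1))) :=
    fun o => T.filter (fun z => tf o + 1 ≤ cf o z) with hFo
  set Go : {o : V // o ∈ Kᶜ} → Finset (VG K (m * (2 * r + 1))) :=
    fun o => T.filter (fun z => 1 ≤ cf o z) with hGo
  have hFm : ∀ o, m ≤ (Fo o).card := by
    intro o
    have : (Finset.univ : Finset (Fin m)).card ≤ (Fo o).card := by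
      apply Finset.card_le_card_of_injOn (dsel o)
      · intro j _
        simp only [Finset.mem_coe, hFo, Finset.mem_filter, hT]
        refine ⟨Set.mem_toFinset.2 (hdmem o j), ?_⟩
        have := hdlb o j
        omega
      · intro a _ b _ hab
        have h1 := hdlb o a
        have h2 := hdub o a
        have h3 := hdlb o b
        have h4 := hdub o b
        rw [hab] at h1 h2
        have hle1 : (2 * r + 1) * (a : ℕ) < (2 * r + 1) * ((b : ℕ) + 1) := by
          rw [Nat.mul_succ]; omega
        have hle2 : (2 * r + 1) * (b : ℕ) < (2 * r + 1) * ((a : ℕ) + 1) := by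
          rw [Nat.mul_succ]; omega
        have ha' := Nat.lt_of_mul_lt_mul_left hle1
        have hb' := Nat.lt_of_mul_lt_mul_left hle2
        exact Fin.ext (by omega)
    simpa using this
  have hFG : ∀ o, Fo o ⊆ Go o := by
    intro o z hz
    simp only [hFo, hGo, Finset.mem_filter] at hz ⊢
    exact ⟨hz.1, by omega⟩
  have hGm : ∀ o, m + (if Sh o then 1 else 0) ≤ (Go o).card := by
    intro o
    split
    · rename_i h
      set z₀ := h.choose with hz₀
      obtain ⟨hz₀D, hz₀1, hz₀r⟩ := h.choose_spec
      have hcz : tf o = cf o z₀ := by simp only [htf]; rw [dif_pos h]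
      have hz₀G : z₀ ∈ Go o := by
        simp only [hGo, Finset.mem_filter, hT]
        exact ⟨Set.mem_toFinset.2 hz₀D, hz₀1⟩
      have hz₀F : z₀ ∉ Fo o := by
        simp only [hFo, Finset.mem_filter, not_and]
        intro _
        omega
      have hins : insert z₀ (Fo o) ⊆ Go o := by
        intro z hz
        rcases Finset.mem_insert.1 hz with rfl | hz
        · exact hz₀G
        · exact hFG o hz
      have h1 := Finset.card_le_card hins
      rw [Finset.card_insert_of_notMem hz₀F] at h1
      have h2 := hFm o
      omega
    · have h1 := Finset.card_le_card (hFG o)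
      have h2 := hFm o
      omega
  set Vp : Finset (VG K (m * (2 * r + 1))) := T.filter (fun z => ow z = none) with hVp
  have hGdisj : ∀ o ∈ (Finset.univ : Finset {o : V // o ∈ Kᶜ}),
      ∀ o' ∈ (Finset.univ : Finset {o : V // o ∈ Kᶜ}), o ≠ o' →
      Disjoint (Go o) (Go o') := by
    intro o _ o' _ hne
    rw [Finset.disjoint_left]
    intro z hz hz'
    simp only [hGo, Finset.mem_filter] at hz hz'
    have h1 := (cf_ge_one hz.2).1
    have h2 := (cf_ge_one hz'.2).1
    rw [h1] at h2
    simp only [Option.some.injEq] at h2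
    exact hne h2
  have hVGdisj : Disjoint Vp (Finset.univ.biUnion Go) := by
    rw [Finset.disjoint_left]
    intro z hz hz'
    rw [Finset.mem_biUnion] at hz'
    obtain ⟨o, _, hzo⟩ := hz'
    simp only [hVp, Finset.mem_filter] at hz
    simp only [hGo, Finset.mem_filter] at hzo
    have := (cf_ge_one hzo.2).1
    rw [hz.2] at this
    cases this
  have hsub : Vp ∪ Finset.univ.biUnion Go ⊆ T := by
    intro z hz
    rcases Finset.mem_union.1 hz with hz | hz
    · exact Finset.filter_subset _ _ hz
    · rw [Finset.mem_biUnion] at hz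
      obtain ⟨o, _, hzo⟩ := hz
      exact Finset.filter_subset _ _ hzo
  have hcount : Vp.card + ∑ o : {o : V // o ∈ Kᶜ}, (Go o).card ≤ T.card := by
    have h1 := Finset.card_le_card hsub
    rw [Finset.card_union_of_disjoint hVGdisj, Finset.card_biUnion hGdisj] at h1
    exact h1
  have hsum : m * Kᶜ.card + (Finset.univ.filter Sh).card ≤
      ∑ o : {o : V // o ∈ Kᶜ}, (Go o).card := by
    calc m * Kᶜ.card + (Finset.univ.filter Sh).card
        = ∑ o : {o : V // o ∈ Kᶜ}, (m + if Sh o then 1 else 0) := by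
          rw [Finset.sum_add_distrib, Finset.sum_const, Finset.sum_boole,
            Finset.card_univ, Fintype.card_coe, smul_eq_mul]
          simp only [Nat.cast_id]
          ring
      _ ≤ _ := Finset.sum_le_sum (fun o _ => hGm o)
  have hD1 : ({u : V | (Sum.inl (Sum.inl u) : VG K (m * (2 * r + 1))) ∈ D'}).ncard
      ≤ Vp.card := by
    rw [← Set.ncard_coe_finset]
    apply Set.ncard_le_ncard_of_injOn
      (fun u => (Sum.inl (Sum.inl u) : VG K (m * (2 * r + 1))))
    · intro u hu
      simp only [hVp, Finset.coe_filter, Set.mem_setOf_eq, hT]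
      exact ⟨Set.mem_toFinset.2 hu, rfl⟩
    · intro a _ b _ h
      simpa using h
  have hD2 : (Subtype.val '' {o : {o : V // o ∈ Kᶜ} | Sh o}).ncard ≤
      (Finset.univ.filter Sh).card := by
    calc (Subtype.val '' {o : {o : V // o ∈ Kᶜ} | Sh o}).ncard
        ≤ ({o : {o : V // o ∈ Kᶜ} | Sh o}).ncard := Set.ncard_image_le (Set.toFinite _)
      _ = (Finset.univ.filter Sh).card := by
          rw [← Set.ncard_coe_finset]
          congr 1
          ext o
          simp
  have hDle : D.ncard ≤ Vp.card + (Finset.univ.filter Sh).card := by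
    have h3 := Set.ncard_union_le
      ({u : V | (Sum.inl (Sum.inl u) : VG K (m * (2 * r + 1))) ∈ D'})
      (Subtype.val '' {o : {o : V // o ∈ Kᶜ} | Sh o})
    rw [hDdef]
    omega
  have hTcard : T.card = D'.ncard := (Set.ncard_eq_toFinset_card' D').symm
  omega

end DomPf

/-- Let `σ = m·(2r+1)` and let `G'` be obtained from `Ĝ` by attaching
to every vertex of `O = V(Ĝ) ∖ K` a pendant path of `σ − 1` new vertices.  Then the
minimum size of an `r`-dominating set of `G'` equals `m·|O|` plus the minimum size of
a set `D ⊆ V(Ĝ)` that `r`-dominates `K` in `Ĝ`. -/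
theorem domination_multikernel_paths {V : Type*} [Fintype V] [DecidableEq V]
    (Ghat : SimpleGraph V) (K : Finset V) (r m : ℕ) (hr : 1 ≤ r) (hm : 1 ≤ m) :
    sInf {n : ℕ |
        ∃ D' : Set ((V ⊕ {o : V // o ∈ Kᶜ}) ⊕
            (Σ _p : {o : V // o ∈ Kᶜ}, Fin (m * (2 * r + 1) - 1 - 1))),
          (∀ x, ∃ d ∈ D',
            ∃ w : (Ghat.attachPendants Kᶜ (m * (2 * r + 1) - 1)).Walk d x,
              w.length ≤ r) ∧ D'.ncard = n}
      = m * Kᶜ.card +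
        sInf {n : ℕ | ∃ D : Set V,
          (∀ v ∈ K, ∃ d ∈ D, ∃ w : Ghat.Walk d v, w.length ≤ r) ∧ D.ncard = n} := by
  classical
  set A := {n : ℕ |
      ∃ D' : Set ((V ⊕ {o : V // o ∈ Kᶜ}) ⊕
          (Σ _p : {o : V // o ∈ Kᶜ}, Fin (m * (2 * r + 1) - 1 - 1))),
        (∀ x, ∃ d ∈ D',
          ∃ w : (Ghat.attachPendants Kᶜ (m * (2 * r + 1) - 1)).Walk d x,
            w.length ≤ r) ∧ D'.ncard = n} with hA
  set B := {n : ℕ | ∃ D : Set V,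
      (∀ v ∈ K, ∃ d ∈ D, ∃ w : Ghat.Walk d v, w.length ≤ r) ∧ D.ncard = n} with hB
  have hAne : A.Nonempty :=
    ⟨_, Set.univ, fun x => ⟨x, trivial, SimpleGraph.Walk.nil, by simp⟩, rfl⟩
  have hBne : B.Nonempty :=
    ⟨_, Set.univ, fun v _ => ⟨v, trivial, SimpleGraph.Walk.nil, by simp⟩, rfl⟩
  apply le_antisymm
  · obtain ⟨D, hD, hcard⟩ := Nat.sInf_mem hBne
    obtain ⟨D', hdom, hle⟩ := DomPf.upper Ghat K r m hr hm hD
    have hmem : D'.ncard ∈ A := ⟨D', hdom, rfl⟩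
    have h2 := Nat.sInf_le hmem
    omega
  · obtain ⟨D', hdom, hcard⟩ := Nat.sInf_mem hAne
    obtain ⟨D, hDdom, hle⟩ := DomPf.lower Ghat K r m hr hm hdom
    have hmem : D.ncard ∈ B := ⟨D, hDdom, rfl⟩
    have h2 := Nat.sInf_le hmem
    omega
end

section
/- Let Ĝ be a finite simple graph, K ⊆ V(Ĝ), O = V(Ĝ) ∖ K, r ≥ 1 and m ≥ 1 natural numbers, and set σ = m·(2r+1). Let G' be obtained from Ĝ by attaching to every vertex v ∈ O a pendant path of σ−1 new vertices. Then the maximum size of a 2r-independent set of G' (a set whose distinct members admit no walk of length at most 2r between them in G') equals m·|O| plus the maximum size of a set I ⊆ K that is 2r-independent in Ĝ. -/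
namespace PendAux

variable {V : Type*} [Fintype V] [DecidableEq V]

abbrev PVx (V : Type*) (O : Finset V) (ℓ : ℕ) : Type _ :=
  (V ⊕ {o : V // o ∈ O}) ⊕ (Σ _p : {o : V // o ∈ O}, Fin (ℓ - 1))

def pj {V : Type*} {O : Finset V} {ℓ : ℕ} : PVx V O ℓ → V
  | .inl (.inl v) => v
  | .inl (.inr o) => o.1
  | .inr ⟨p, _⟩ => p.1

def pos {V : Type*} {O : Finset V} {ℓ : ℕ} : PVx V O ℓ → ℕ
  | .inl (.inl _) => 0
  | .inl (.inr _) => ℓ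
  | .inr ⟨_, i⟩ => (i : ℕ) + 1

def vtx {V : Type*} {O : Finset V} {ℓ : ℕ} (o : {o : V // o ∈ O}) (k : ℕ) : PVx V O ℓ :=
  if k = 0 then .inl (.inl o.1)
  else if h : k - 1 < ℓ - 1 then .inr ⟨o, ⟨k - 1, h⟩⟩
  else .inl (.inr o)

variable {G : SimpleGraph V} {O : Finset V} {ℓ : ℕ}

lemma adj_cases (hℓ : 2 ≤ ℓ) {x y : PVx V O ℓ} (h : (G.attachPendants O ℓ).Adj x y) :
    (pj x = pj y ∧ (pos x + 1 = pos y ∨ pos y + 1 = pos x)) ∨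
    (G.Adj (pj x) (pj y) ∧ pos x = 0 ∧ pos y = 0) := by
  simp only [SimpleGraph.attachPendants, SimpleGraph.addPaths, SimpleGraph.fromRel_adj] at h
  obtain ⟨-, h | h⟩ := h <;>
    rcases h with ⟨u, w, hadj, rfl, rfl⟩ | ⟨p, hp, rfl, rfl⟩ | ⟨p, i, hi, rfl, rfl⟩ |
      ⟨p, i, j, hij, rfl, rfl⟩ | ⟨p, i, hi, rfl, rfl⟩ <;>
    simp_all [pj, pos] <;>
    first
      | exact hadj
      | exact hadj.symm
      | omega



lemma pj_vtx (o : {o : V // o ∈ O}) (k : ℕ) : pj (vtx (ℓ := ℓ) o k) = o.1 := by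
  unfold vtx; split_ifs <;> rfl

lemma pos_vtx (hℓ : 2 ≤ ℓ) (o : {o : V // o ∈ O}) {k : ℕ} (hk : k ≤ ℓ) :
    pos (vtx (ℓ := ℓ) o k) = k := by
  unfold vtx; split_ifs with h1 h2 <;> simp [pos] <;> omega

lemma vtx_inj (hℓ : 2 ≤ ℓ) {o o' : {o : V // o ∈ O}} {k k' : ℕ} (hk : k ≤ ℓ) (hk' : k' ≤ ℓ)
    (h : vtx (ℓ := ℓ) o k = vtx o' k') : o = o' ∧ k = k' := by
  have h1 := congrArg pj h
  have h2 := congrArg pos h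
  rw [pj_vtx, pj_vtx] at h1
  rw [pos_vtx hℓ o hk, pos_vtx hℓ o' hk'] at h2
  exact ⟨Subtype.ext h1, h2⟩

lemma fiber_eq (hℓ : 2 ≤ ℓ) {x : PVx V O ℓ} {o : {o : V // o ∈ O}} (h : pj x = o.1) :
    x = vtx o (pos x) ∧ pos x ≤ ℓ := by
  match x with
  | .inl (.inl v) =>
      simp only [pj] at h; subst h
      exact ⟨by simp [vtx, pos], by simp [pos]⟩
  | .inl (.inr p) =>
      simp only [pj] at h
      have : p = o := Subtype.ext h
      subst this
      refine ⟨?_, by simp [pos]⟩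
      show _ = vtx p ℓ
      unfold vtx
      rw [if_neg (by omega), dif_neg (by omega)]
  | .inr ⟨p, i⟩ =>
      simp only [pj] at h
      have : p = o := Subtype.ext h
      subst this
      have hi := i.2
      refine ⟨?_, by simp [pos]; omega⟩
      show _ = vtx p ((i:ℕ) + 1)
      unfold vtx
      rw [if_neg (by omega), dif_pos (by omega : (i:ℕ) + 1 - 1 < ℓ - 1)]
      simp

lemma fiber_notmem {x : PVx V O ℓ} {v : V} (hv : v ∉ O) (h : pj x = v) :
    x = .inl (.inl v) := by
  match x with
  | .inl (.inl u) => simp only [pj] at h; subst h; rfl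
  | .inl (.inr p) => simp only [pj] at h; exact absurd (h ▸ p.2) hv
  | .inr ⟨p, i⟩ => simp only [pj] at h; exact absurd (h ▸ p.2) hv

lemma adj_vtx (hℓ : 2 ≤ ℓ) (o : {o : V // o ∈ O}) {k : ℕ} (hk : k + 1 ≤ ℓ) :
    (G.attachPendants O ℓ).Adj (vtx o k) (vtx o (k + 1)) := by
  rw [SimpleGraph.attachPendants, SimpleGraph.addPaths, SimpleGraph.fromRel_adj]
  rcases Nat.eq_zero_or_pos k with rfl | hk0
  · have h1 : (vtx o 1 : PVx V O ℓ) = .inr ⟨o, ⟨0, by omega⟩⟩ := by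
      simp only [vtx]
      rw [if_neg (by omega), dif_pos (by omega : (1:ℕ) - 1 < ℓ - 1)]
    have h0 : (vtx o 0 : PVx V O ℓ) = .inl (.inl o.1) := if_pos rfl
    rw [h0, h1]
    constructor
    · simp
    · left; right; right; left
      exact ⟨o, ⟨0, by omega⟩, rfl, rfl, rfl⟩
  · rcases Nat.lt_or_ge (k + 1) ℓ with hlt | hge
    · constructor
      · simp only [vtx]
        rw [if_neg (by omega), dif_pos (by omega : k - 1 < ℓ - 1),
          if_neg (by omega), dif_pos (by omega : k + 1 - 1 < ℓ - 1)]
        simp; omega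
      · left; right; right; right; left
        refine ⟨o, ⟨k - 1, by omega⟩, ⟨k, by omega⟩, by simp; omega, ?_, ?_⟩
        · simp only [vtx]; rw [if_neg (by omega), dif_pos (by omega : k - 1 < ℓ - 1)]
        · simp only [vtx]; rw [if_neg (by omega), dif_pos (by omega : k + 1 - 1 < ℓ - 1)]
          simp
    · have hkeq : k + 1 = ℓ := le_antisymm hk hge
      constructor
      · simp only [vtx]
        rw [if_neg (by omega), dif_pos (by omega : k - 1 < ℓ - 1),
          if_neg (by omega), dif_neg (by omega)]
        simp
      · left; right; right; right; right
        refine ⟨o, ⟨k - 1, by omega⟩, by simp; omega, ?_, ?_⟩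
        · simp only [vtx]; rw [if_neg (by omega), dif_pos (by omega : k - 1 < ℓ - 1)]
        · simp only [vtx]; rw [if_neg (by omega), dif_neg (by omega)]

lemma walk_vtx (hℓ : 2 ≤ ℓ) (o : {o : V // o ∈ O}) :
    ∀ (j k : ℕ), k + j ≤ ℓ →
      ∃ p : (G.attachPendants O ℓ).Walk (vtx o k) (vtx o (k + j)), p.length = j := by
  intro j
  induction j with
  | zero => intro k _; exact ⟨SimpleGraph.Walk.nil, rfl⟩
  | succ n ih =>
      intro k hk
      obtain ⟨p, hp⟩ := ih k (by omega)
      refine ⟨(p.concat (adj_vtx hℓ o (by omega))).copy rfl (by ring_nf), ?_⟩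
      rw [SimpleGraph.Walk.length_copy, SimpleGraph.Walk.length_concat, hp]


lemma proj_walk (hℓ : 2 ≤ ℓ) :
    ∀ {x y : PVx V O ℓ} (p : (G.attachPendants O ℓ).Walk x y),
      ∃ q : G.Walk (pj x) (pj y), q.length ≤ p.length := by
  intro x y p
  induction p with
  | nil => exact ⟨SimpleGraph.Walk.nil, le_refl _⟩
  | cons h p ih =>
      obtain ⟨q, hq⟩ := ih
      rcases adj_cases hℓ h with ⟨heq, -⟩ | ⟨hadj, -⟩
      · rw [heq]
        exact ⟨q, hq.trans (by simp)⟩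
      · exact ⟨q.cons hadj, by simpa using Nat.add_le_add_right hq 1⟩

lemma lip {f : PVx V O ℓ → ℕ}
    (hf : ∀ x y, (G.attachPendants O ℓ).Adj x y → f x ≤ f y + 1) :
    ∀ {u w : PVx V O ℓ} (p : (G.attachPendants O ℓ).Walk u w), f u ≤ f w + p.length := by
  intro u w p
  induction p with
  | nil => simp
  | cons h p ih =>
      have h1 := hf _ _ h
      simp only [SimpleGraph.Walk.length_cons]
      omega

def gfun {V : Type*} {O : Finset V} [DecidableEq V] (ℓ : ℕ) (o : {o : V // o ∈ O}) (x : PVx V O ℓ) : ℕ :=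
  if pj x = o.1 then pos x + 1 else 0

lemma gfun_lip (hℓ : 2 ≤ ℓ) (o : {o : V // o ∈ O}) :
    ∀ x y : PVx V O ℓ, (G.attachPendants O ℓ).Adj x y → gfun ℓ o x ≤ gfun ℓ o y + 1 := by
  intro x y h
  rcases adj_cases hℓ h with ⟨heq, hpos⟩ | ⟨hadj, hx0, hy0⟩
  · unfold gfun
    rw [heq]
    split_ifs
    · omega
    · omega
  · unfold gfun
    have : pj x ≠ pj y := hadj.ne
    split_ifs <;> omega

lemma close (hℓ : 2 ≤ ℓ) {x y : PVx V O ℓ} {r : ℕ}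
    (h : ∃ p : (G.attachPendants O ℓ).Walk x y, p.length ≤ 2 * r) (o : {o : V // o ∈ O}) :
    gfun ℓ o x ≤ gfun ℓ o y + 2 * r ∧ gfun ℓ o y ≤ gfun ℓ o x + 2 * r := by
  obtain ⟨p, hp⟩ := h
  constructor
  · have := lip (gfun_lip hℓ o) p; omega
  · have := lip (gfun_lip hℓ o) p.reverse
    rw [SimpleGraph.Walk.length_reverse] at this; omega

def liftHom (G : SimpleGraph V) (O : Finset V) (ℓ : ℕ) : G →g G.attachPendants O ℓ where
  toFun v := .inl (.inl v)
  map_rel' := by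
    intro a b h
    rw [SimpleGraph.attachPendants, SimpleGraph.addPaths, SimpleGraph.fromRel_adj]
    exact ⟨by simpa using h.ne, Or.inl (Or.inl ⟨a, b, h, rfl, rfl⟩)⟩

lemma gfun_vtx (hℓ : 2 ≤ ℓ) (o : {o : V // o ∈ O}) {k : ℕ} (hk : k ≤ ℓ) :
    gfun ℓ o (vtx o k) = k + 1 := by
  unfold gfun
  rw [pj_vtx, if_pos rfl, pos_vtx hℓ o hk]

lemma gfun_vtx_ne (hℓ : 2 ≤ ℓ) {o o' : {o : V // o ∈ O}} (hne : o ≠ o') (k : ℕ) :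
    gfun ℓ o (vtx o' k) = 0 := by
  unfold gfun
  rw [pj_vtx, if_neg (fun h => hne (Subtype.ext h.symm))]

lemma gfun_core (o : {o : V // o ∈ O}) {v : V} (hv : v ≠ o.1) :
    gfun ℓ o (.inl (.inl v) : PVx V O ℓ) = 0 := by
  unfold gfun
  rw [if_neg]
  exact hv

lemma fiber_card (hℓ : 2 ≤ ℓ) {r mm : ℕ} (hσ : ℓ + 1 = mm * (2 * r + 1))
    {I' : Set (PVx V O ℓ)}
    (hind : ∀ u ∈ I', ∀ w ∈ I', u ≠ w →
      ¬∃ p : (G.attachPendants O ℓ).Walk u w, p.length ≤ 2 * r)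
    (F : Finset (PVx V O ℓ)) (hF : ∀ x ∈ F, x ∈ I') {v : V} (hv : v ∈ O) :
    (F.filter (fun x => pj x = v)).card ≤ mm := by
  obtain ⟨o, hov⟩ : ∃ o : {o : V // o ∈ O}, o.1 = v := ⟨⟨v, hv⟩, rfl⟩
  subst hov
  have hd : 0 < 2 * r + 1 := by omega
  have key : ∀ x ∈ F.filter (fun x => pj x = o.1), ∀ y ∈ F.filter (fun x => pj x = o.1),
      x ≠ y → pos x + (2 * r + 1) ≤ pos y ∨ pos y + (2 * r + 1) ≤ pos x := by
    intro x hx y hy hxy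
    simp only [Finset.mem_filter] at hx hy
    obtain ⟨hxv, hxl⟩ := fiber_eq hℓ hx.2
    obtain ⟨hyv, hyl⟩ := fiber_eq hℓ hy.2
    by_contra hcon
    push_neg at hcon
    -- wlog pos x ≤ pos y
    rcases Nat.le_total (pos x) (pos y) with hle | hle
    · have hne : pos x ≠ pos y := fun h => hxy (by rw [hxv, hyv, h])
      obtain ⟨p, hp⟩ := walk_vtx (G := G) hℓ o (pos y - pos x) (pos x) (by omega)
      have hx' : vtx o (pos x + (pos y - pos x)) = y := by
        rw [(by omega : pos x + (pos y - pos x) = pos y)]; exact hyv.symm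
      exact hind x (hF x hx.1) y (hF y hy.1) hxy
        ⟨(p.copy hxv.symm hx'), by rw [SimpleGraph.Walk.length_copy, hp]; omega⟩
    · have hne : pos y ≠ pos x := fun h => hxy (by rw [hxv, hyv, h])
      obtain ⟨p, hp⟩ := walk_vtx (G := G) hℓ o (pos x - pos y) (pos y) (by omega)
      have hx' : vtx o (pos y + (pos x - pos y)) = x := by
        rw [(by omega : pos y + (pos x - pos y) = pos x)]; exact hxv.symm
      exact hind y (hF y hy.1) x (hF x hx.1) (Ne.symm hxy)
        ⟨(p.copy hyv.symm hx'), by rw [SimpleGraph.Walk.length_copy, hp]; omega⟩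
  have : (F.filter (fun x => pj x = o.1)).card ≤ (Finset.range mm).card := by
    apply Finset.card_le_card_of_injOn (fun x => pos x / (2 * r + 1))
    · intro x hx
      simp only [Finset.coe_filter, Finset.mem_coe, Finset.mem_filter, Set.mem_setOf_eq] at hx
      obtain ⟨-, hxl⟩ := fiber_eq hℓ hx.2
      rw [Finset.mem_coe, Finset.mem_range, Nat.div_lt_iff_lt_mul hd]
      omega
    · intro x hx y hy hdiv
      have hdiv' : pos x / (2 * r + 1) = pos y / (2 * r + 1) := hdiv
      by_contra hxy
      have h2 := key x hx y hy hxy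
      rcases h2 with h2 | h2
      · have : pos x / (2 * r + 1) < pos y / (2 * r + 1) := by
          have := Nat.add_div_right (pos x) hd
          calc pos x / (2 * r + 1) < pos x / (2 * r + 1) + 1 := Nat.lt_succ_self _
            _ = (pos x + (2 * r + 1)) / (2 * r + 1) := (Nat.add_div_right (pos x) hd).symm
            _ ≤ pos y / (2 * r + 1) := Nat.div_le_div_right h2
        omega
      · have : pos y / (2 * r + 1) < pos x / (2 * r + 1) := by
          calc pos y / (2 * r + 1) < pos y / (2 * r + 1) + 1 := Nat.lt_succ_self _
            _ = (pos y + (2 * r + 1)) / (2 * r + 1) := (Nat.add_div_right (pos y) hd).symm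
            _ ≤ pos x / (2 * r + 1) := Nat.div_le_div_right h2
        omega
  simpa using this

end PendAux


open PendAux

/-- Let `σ = m·(2r+1)` and let `G'` be obtained from `Ĝ` by attaching
to every vertex of `O = V(Ĝ) ∖ K` a pendant path of `σ − 1` new vertices.  Then the
maximum size of a `2r`-independent set of `G'` equals `m·|O|` plus the maximum size of
a `2r`-independent set of `Ĝ` contained in `K`. -/
theorem independence_multikernel_paths {V : Type*} [Fintype V] [DecidableEq V]
    (Ghat : SimpleGraph V) (K : Finset V) (r m : ℕ) (hr : 1 ≤ r) (hm : 1 ≤ m) :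
    sSup {n : ℕ |
        ∃ I' : Set ((V ⊕ {o : V // o ∈ Kᶜ}) ⊕
            (Σ _p : {o : V // o ∈ Kᶜ}, Fin (m * (2 * r + 1) - 1 - 1))),
          (∀ u ∈ I', ∀ w ∈ I', u ≠ w →
            ¬ ∃ p : (Ghat.attachPendants Kᶜ (m * (2 * r + 1) - 1)).Walk u w,
                p.length ≤ 2 * r) ∧ I'.ncard = n}
      = m * Kᶜ.card +
        sSup {n : ℕ | ∃ I : Set V, I ⊆ (K : Set V) ∧
          (∀ u ∈ I, ∀ w ∈ I, u ≠ w → ¬ ∃ p : Ghat.Walk u w, p.length ≤ 2 * r) ∧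
          I.ncard = n} := by
  classical
  have h3 : 3 ≤ m * (2 * r + 1) := by
    calc 3 = 1 * (2 * 1 + 1) := by norm_num
      _ ≤ m * (2 * r + 1) := Nat.mul_le_mul hm (by omega)
  have hℓ2 : 2 ≤ m * (2 * r + 1) - 1 := by omega
  have hσ : m * (2 * r + 1) - 1 + 1 = m * (2 * r + 1) := by omega
  set SL : Set ℕ := {n : ℕ |
      ∃ I' : Set ((V ⊕ {o : V // o ∈ Kᶜ}) ⊕
          (Σ _p : {o : V // o ∈ Kᶜ}, Fin (m * (2 * r + 1) - 1 - 1))),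
        (∀ u ∈ I', ∀ w ∈ I', u ≠ w →
          ¬ ∃ p : (Ghat.attachPendants Kᶜ (m * (2 * r + 1) - 1)).Walk u w,
              p.length ≤ 2 * r) ∧ I'.ncard = n} with hSLdef
  set SR : Set ℕ := {n : ℕ | ∃ I : Set V, I ⊆ (K : Set V) ∧
      (∀ u ∈ I, ∀ w ∈ I, u ≠ w → ¬ ∃ p : Ghat.Walk u w, p.length ≤ 2 * r) ∧
      I.ncard = n} with hSRdef
  have hSR0 : (0 : ℕ) ∈ SR := by
    rw [hSRdef]
    refine ⟨∅, by simp, by simp, by simp⟩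
  have hSRbdd : BddAbove SR := by
    refine ⟨Fintype.card V, ?_⟩
    intro n hn
    rw [hSRdef] at hn
    obtain ⟨I, -, -, rfl⟩ := hn
    calc I.ncard ≤ (Set.univ : Set V).ncard :=
          Set.ncard_le_ncard (Set.subset_univ I) Set.finite_univ
      _ = Fintype.card V := by rw [Set.ncard_univ, Nat.card_eq_fintype_card]
  have hSL0 : (0 : ℕ) ∈ SL := by
    rw [hSLdef]
    refine ⟨∅, by simp, by simp⟩
  have hSLbdd : BddAbove SL := by
    refine ⟨Fintype.card ((V ⊕ {o : V // o ∈ Kᶜ}) ⊕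
        (Σ _p : {o : V // o ∈ Kᶜ}, Fin (m * (2 * r + 1) - 1 - 1))), ?_⟩
    intro n hn
    rw [hSLdef] at hn
    obtain ⟨I', -, rfl⟩ := hn
    calc I'.ncard ≤ (Set.univ : Set _).ncard :=
          Set.ncard_le_ncard (Set.subset_univ I') Set.finite_univ
      _ = _ := by rw [Set.ncard_univ, Nat.card_eq_fintype_card]
  -- the optimal right-hand side set
  have hmem := Nat.sSup_mem ⟨0, hSR0⟩ hSRbdd
  rw [hSRdef] at hmem
  obtain ⟨I, hIK, hIind, hIcard⟩ := hmem
  apply le_antisymm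
  · -- upper bound
    apply csSup_le ⟨0, hSL0⟩
    intro n hn
    rw [hSLdef] at hn
    obtain ⟨I', hind, rfl⟩ := hn
    have hfin : I'.Finite := Set.toFinite I'
    have hcard : I'.ncard = hfin.toFinset.card := Set.ncard_eq_toFinset_card I' hfin
    have hsplit : hfin.toFinset.card =
        ∑ v ∈ Finset.univ, ((hfin.toFinset).filter (fun x => pj x = v)).card :=
      Finset.card_eq_sum_card_fiberwise (fun x _ => Finset.mem_univ _)
    have hcompl : (∑ v ∈ Kᶜ, ((hfin.toFinset).filter (fun x => pj x = v)).card)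
        + ∑ v ∈ Kᶜᶜ, ((hfin.toFinset).filter (fun x => pj x = v)).card
        = ∑ v ∈ Finset.univ, ((hfin.toFinset).filter (fun x => pj x = v)).card :=
      Finset.sum_add_sum_compl Kᶜ _
    have hO : ∀ v ∈ Kᶜ, ((hfin.toFinset).filter (fun x => pj x = v)).card ≤ m := by
      intro v hv
      exact fiber_card hℓ2 hσ hind hfin.toFinset (fun x hx => hfin.mem_toFinset.1 hx) hv
    have hOsum : (∑ v ∈ Kᶜ, ((hfin.toFinset).filter (fun x => pj x = v)).card)
        ≤ Kᶜ.card * m := by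
      calc _ ≤ ∑ _v ∈ Kᶜ, m := Finset.sum_le_sum hO
        _ = Kᶜ.card * m := by rw [Finset.sum_const, smul_eq_mul]
    have hK : ∀ v ∈ Kᶜᶜ, ((hfin.toFinset).filter (fun x => pj x = v)).card ≤
        (if (Sum.inl (Sum.inl v) : (V ⊕ {o : V // o ∈ Kᶜ}) ⊕ _) ∈ I' then 1 else 0) := by
      intro v hv
      have hvK : v ∉ Kᶜ := by simpa using hv
      have hsub : (hfin.toFinset).filter (fun x => pj x = v) ⊆ {Sum.inl (Sum.inl v)} := by
        intro x hx
        rw [Finset.mem_filter] at hx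
        rw [Finset.mem_singleton]
        exact fiber_notmem hvK hx.2
      split_ifs with hmem'
      · exact (Finset.card_le_card hsub).trans (by simp)
      · rw [Nat.le_zero, Finset.card_eq_zero, Finset.eq_empty_iff_forall_notMem]
        intro x hx
        have := hsub hx
        rw [Finset.mem_singleton] at this
        subst this
        rw [Finset.mem_filter] at hx
        exact hmem' (hfin.mem_toFinset.1 hx.1)
    have hKsum : (∑ v ∈ Kᶜᶜ, ((hfin.toFinset).filter (fun x => pj x = v)).card)
        ≤ (Kᶜᶜ.filter (fun v => (Sum.inl (Sum.inl v) : (V ⊕ {o : V // o ∈ Kᶜ}) ⊕ _) ∈ I')).card := by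
      rw [Finset.card_filter]
      exact Finset.sum_le_sum hK
    -- the kernel part is independent in Ghat
    have hCmem : ((Kᶜᶜ.filter (fun v =>
        (Sum.inl (Sum.inl v) : (V ⊕ {o : V // o ∈ Kᶜ}) ⊕ _) ∈ I')).card : ℕ) ∈ SR := by
      rw [hSRdef]
      refine ⟨↑(Kᶜᶜ.filter (fun v => (Sum.inl (Sum.inl v) : (V ⊕ {o : V // o ∈ Kᶜ}) ⊕ _) ∈ I')),
        ?_, ?_, Set.ncard_coe_finset _⟩
      · intro v hv
        simp only [Finset.coe_filter, Set.mem_setOf_eq, compl_compl] at hv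
        exact hv.1
      · intro u hu w hw hne ⟨p, hp⟩
        simp only [Finset.coe_filter, Set.mem_setOf_eq, compl_compl] at hu hw
        refine hind _ hu.2 _ hw.2 (by simp [hne]) ?_
        exact ⟨p.map (liftHom Ghat Kᶜ (m * (2 * r + 1) - 1)), by
          exact (SimpleGraph.Walk.length_map _ _).le.trans hp⟩
    have hCle := le_csSup hSRbdd hCmem
    calc I'.ncard = _ := hcard
      _ = _ := hsplit
      _ = _ := hcompl.symm
      _ ≤ Kᶜ.card * m + sSup SR := Nat.add_le_add hOsum (le_trans hKsum hCle)
      _ = m * Kᶜ.card + sSup SR := by rw [Nat.mul_comm]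
  · -- lower bound
    apply le_csSup hSLbdd
    rw [hSLdef]
    have hIfin : I.Finite := Set.toFinite I
    have hd : 0 < 2 * r + 1 := by omega
    have hq_le : ∀ k : Fin m, 2 * r + (k : ℕ) * (2 * r + 1) ≤ m * (2 * r + 1) - 1 := by
      intro k
      have h1 : (k : ℕ) + 1 ≤ m := k.2
      have h2 : ((k : ℕ) + 1) * (2 * r + 1) ≤ m * (2 * r + 1) :=
        Nat.mul_le_mul_right _ h1
      have h3' : ((k : ℕ) + 1) * (2 * r + 1) = (k : ℕ) * (2 * r + 1) + (2 * r + 1) := by ring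
      omega
    set A : Finset ((V ⊕ {o : V // o ∈ Kᶜ}) ⊕
        (Σ _p : {o : V // o ∈ Kᶜ}, Fin (m * (2 * r + 1) - 1 - 1))) :=
      hIfin.toFinset.image (fun v => Sum.inl (Sum.inl v)) with hA
    set B : Finset ((V ⊕ {o : V // o ∈ Kᶜ}) ⊕
        (Σ _p : {o : V // o ∈ Kᶜ}, Fin (m * (2 * r + 1) - 1 - 1))) :=
      Finset.univ.image (fun ok : {o : V // o ∈ Kᶜ} × Fin m =>
        vtx ok.1 (2 * r + (ok.2 : ℕ) * (2 * r + 1))) with hB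
    have hmemAB : ∀ x ∈ A ∪ B, (∃ v ∈ I, x = Sum.inl (Sum.inl v)) ∨
        (∃ o : {o : V // o ∈ Kᶜ}, ∃ k : Fin m, x = vtx o (2 * r + (k : ℕ) * (2 * r + 1))) := by
      intro x hx
      rw [Finset.mem_union] at hx
      rcases hx with hx | hx
      · rw [hA, Finset.mem_image] at hx
        obtain ⟨v, hv, rfl⟩ := hx
        exact Or.inl ⟨v, hIfin.mem_toFinset.1 hv, rfl⟩
      · rw [hB, Finset.mem_image] at hx
        obtain ⟨⟨o, k⟩, -, rfl⟩ := hx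
        exact Or.inr ⟨o, k, rfl⟩
    refine ⟨↑(A ∪ B), ?_, ?_⟩
    · -- independence
      intro u hu w hw hne hwalk
      rcases hmemAB u (by exact_mod_cast hu) with ⟨a, haI, rfl⟩ | ⟨o, k, rfl⟩ <;>
        rcases hmemAB w (by exact_mod_cast hw) with ⟨b, hbI, rfl⟩ | ⟨o', k', rfl⟩
      · -- core-core
        obtain ⟨p, hp⟩ := hwalk
        obtain ⟨qq, hqq⟩ := proj_walk hℓ2 p
        exact hIind a haI b hbI (by simpa using hne) ⟨qq, le_trans hqq hp⟩
      · -- core-branch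
        have hcl := close hℓ2 hwalk o'
        have hne' : a ≠ o'.1 := by
          intro h
          have := o'.2
          rw [← h] at this
          simp only [Finset.mem_compl] at this
          exact this (hIK haI)
        rw [gfun_core o' hne', gfun_vtx hℓ2 o' (hq_le k')] at hcl
        omega
      · -- branch-core
        have hcl := close hℓ2 hwalk o
        have hne' : b ≠ o.1 := by
          intro h
          have := o.2
          rw [← h] at this
          simp only [Finset.mem_compl] at this
          exact this (hIK hbI)
        rw [gfun_core o hne', gfun_vtx hℓ2 o (hq_le k)] at hcl
        omega
      · -- branch-branch
        by_cases ho : o = o'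
        · subst ho
          have hkk : (k : ℕ) ≠ (k' : ℕ) := by
            intro h
            exact hne (by rw [Fin.val_injective h])
          have hcl := close hℓ2 hwalk o
          rw [gfun_vtx hℓ2 o (hq_le k), gfun_vtx hℓ2 o (hq_le k')] at hcl
          have hgap : (k : ℕ) * (2 * r + 1) + (2 * r + 1) ≤ (k' : ℕ) * (2 * r + 1) ∨
              (k' : ℕ) * (2 * r + 1) + (2 * r + 1) ≤ (k : ℕ) * (2 * r + 1) := by
            rcases Nat.lt_or_ge (k : ℕ) (k' : ℕ) with h | h
            · left
              calc (k : ℕ) * (2 * r + 1) + (2 * r + 1) = ((k : ℕ) + 1) * (2 * r + 1) := by ring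
                _ ≤ (k' : ℕ) * (2 * r + 1) := Nat.mul_le_mul_right _ h
            · right
              have h' : (k' : ℕ) < (k : ℕ) := by omega
              calc (k' : ℕ) * (2 * r + 1) + (2 * r + 1) = ((k' : ℕ) + 1) * (2 * r + 1) := by ring
                _ ≤ (k : ℕ) * (2 * r + 1) := Nat.mul_le_mul_right _ h'
          omega
        · have hcl := close hℓ2 hwalk o
          rw [gfun_vtx hℓ2 o (hq_le k), gfun_vtx_ne hℓ2 ho _] at hcl
          omega
    · -- cardinality
      have hdisj : Disjoint A B := by
        rw [Finset.disjoint_left]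
        intro x hx hxB
        rw [hA, Finset.mem_image] at hx
        rw [hB, Finset.mem_image] at hxB
        obtain ⟨v, -, rfl⟩ := hx
        obtain ⟨⟨o, k⟩, -, hv⟩ := hxB
        have h1 : pos (vtx (ℓ := m * (2 * r + 1) - 1) o (2 * r + (k : ℕ) * (2 * r + 1)))
            = 2 * r + (k : ℕ) * (2 * r + 1) := pos_vtx hℓ2 o (hq_le k)
        rw [hv] at h1
        simp only [pos] at h1
        omega
      have hcardA : A.card = I.ncard := by
        rw [hA, Finset.card_image_of_injective _ (fun a b h => by simpa using h),
          ← Set.ncard_eq_toFinset_card I hIfin]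
      have hcardB : B.card = Kᶜ.card * m := by
        rw [hB, Finset.card_image_of_injective _ ?_, Finset.card_univ, Fintype.card_prod,
          Fintype.card_fin]
        · congr 1
          exact Fintype.card_coe Kᶜ
        · intro ⟨o, k⟩ ⟨o', k'⟩ h
          obtain ⟨ho, hk⟩ := vtx_inj hℓ2 (hq_le k) (hq_le k') h
          have : (k : ℕ) * (2 * r + 1) = (k' : ℕ) * (2 * r + 1) := by omega
          have hkk : (k : ℕ) = (k' : ℕ) := Nat.eq_of_mul_eq_mul_right hd this
          exact Prod.ext ho (Fin.val_injective hkk)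
      rw [Set.ncard_coe_finset, Finset.card_union_of_disjoint hdisj, hcardA, hcardB, hIcard]
      rw [Nat.mul_comm Kᶜ.card m]
      exact Nat.add_comm _ _
end

section
/- Let Ĝ be a finite simple graph, L ⊆ V(Ĝ), O = V(Ĝ) ∖ L, and r ≥ 1. Let T be the tree with vertices b₀, b₁, b₂, a₁, …, a₆ in which b₀ is connected to b₁ by a path of length r, b₁ is connected to b₂ by a path of length r, b₁ is connected to each of a₁, a₂, a₃ by a path of length r, and b₂ is connected to each of a₄, a₅, a₆ by a path of length r. Let G' be obtained from Ĝ by attaching to every vertex v ∈ O a fresh copy of T, identifying b₀ with v. Then the minimum size of an r-dominating set of G' equals 2·|O| plus the minimum size of a set D ⊆ V(Ĝ) with N^r_{Ĝ}[v] ∩ D ≠ ∅ for every v ∈ L. -/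
/- Statement 17: to every `o ∈ O = Lᶜ` we attach a fresh copy of the tree `T`,
identifying `b₀` with `o`.  Per copy, the designated tree nodes other than `b₀` are
indexed by `Fin 8`: `b₁ = 0`, `b₂ = 1`, `a₁, a₂, a₃ = 2, 3, 4`, `a₄, a₅, a₆ = 5, 6, 7`.
The copy of `T` consists of 8 paths of length `r`: `b₀–b₁`, `b₁–b₂`, `b₁–a₁`, `b₁–a₂`,
`b₁–a₃`, `b₂–a₄`, `b₂–a₅`, `b₂–a₆`; the path with index `p : Fin 8` ends at node `p`. -/

/-- Source of the `p`-th path of the tree-copy at `o`. -/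
def src17 {V : Type*} [Fintype V] [DecidableEq V] (L : Finset V)
    (q : {o : V // o ∈ Lᶜ} × Fin 8) : V ⊕ ({o : V // o ∈ Lᶜ} × Fin 8) :=
  if q.2.1 = 0 then .inl q.1.1            -- b₀–b₁ starts at b₀ = o
  else if q.2.1 ≤ 4 then .inr (q.1, 0)    -- b₁–b₂, b₁–a₁, b₁–a₂, b₁–a₃ start at b₁
  else .inr (q.1, 1)                      -- b₂–a₄, b₂–a₅, b₂–a₆ start at b₂

/-- Target of the `p`-th path of the tree-copy at `o`: node `p`. -/
def dst17 {V : Type*} [Fintype V] [DecidableEq V] (L : Finset V)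
    (q : {o : V // o ∈ Lᶜ} × Fin 8) : V ⊕ ({o : V // o ∈ Lᶜ} × Fin 8) :=
  .inr q


section Aux

open SimpleGraph

variable {V : Type*} [Fintype V] [DecidableEq V] (Ghat : SimpleGraph V) (L : Finset V) (r : ℕ)

local notation "BB" => ({o : V // o ∈ Lᶜ} × Fin 8)
local notation "VV" => ((V ⊕ ({o : V // o ∈ Lᶜ} × Fin 8)) ⊕ (Σ _p : {o : V // o ∈ Lᶜ} × Fin 8, Fin (r - 1)))
local notation "GG" => (Ghat.addPaths ({o : V // o ∈ Lᶜ} × Fin 8) ({o : V // o ∈ Lᶜ} × Fin 8) (src17 L) (dst17 L) (fun _ => r))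

variable {Ghat L r}

lemma adj_orig {u w : V} (h : Ghat.Adj u w) :
    (GG).Adj (.inl (.inl u)) (.inl (.inl w)) := by
  rw [addPaths, fromRel_adj]
  exact ⟨by simp [h.ne], Or.inl <| Or.inl ⟨u, w, h, rfl, rfl⟩⟩

lemma adj_src_int (p : BB) (i : Fin (r - 1)) (hi : (i : ℕ) = 0) :
    (GG).Adj (.inl (src17 L p)) (.inr ⟨p, i⟩) := by
  rw [addPaths, fromRel_adj]
  exact ⟨by simp, Or.inl <| Or.inr <| Or.inr <| Or.inl ⟨p, i, hi, rfl, rfl⟩⟩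

lemma adj_int_int (p : BB) (i j : Fin (r - 1)) (h : (i : ℕ) + 1 = (j : ℕ)) :
    (GG).Adj (.inr ⟨p, i⟩) (.inr ⟨p, j⟩) := by
  rw [addPaths, fromRel_adj]
  refine ⟨?_, Or.inl <| Or.inr <| Or.inr <| Or.inr <| Or.inl ⟨p, i, j, h, rfl, rfl⟩⟩
  intro hc
  simp only [Sum.inr.injEq] at hc
  have : i = j := by simpa using hc
  subst this; omega

lemma adj_int_dst (p : BB) (i : Fin (r - 1)) (h : (i : ℕ) + 2 = r) :
    (GG).Adj (.inr ⟨p, i⟩) (.inl (dst17 L p)) := by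
  rw [addPaths, fromRel_adj]
  exact ⟨by simp, Or.inl <| Or.inr <| Or.inr <| Or.inr <| Or.inr ⟨p, i, h, rfl, rfl⟩⟩

lemma adj_src_dst (p : BB) (h : r = 1) :
    (GG).Adj (.inl (src17 L p)) (.inl (dst17 L p)) := by
  rw [addPaths, fromRel_adj]
  refine ⟨?_, Or.inl <| Or.inr <| Or.inl ⟨p, h, rfl, rfl⟩⟩
  simp only [ne_eq, Sum.inl.injEq, dst17, src17]
  split_ifs with h1 h2 <;> simp <;> intro hh <;> rw [Prod.ext_iff] at hh <;>
    [skip; skip] <;> simp at hh <;> omega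

end Aux

section Walks

open SimpleGraph

variable {α β : Type*} {G : SimpleGraph α} {H : SimpleGraph β}

/-- 1-Lipschitz functions lower-bound walk lengths. -/
lemma lip_walk (f : α → ℤ) (hf : ∀ x y, G.Adj x y → f x ≤ f y + 1) {x y : α}
    (w : G.Walk x y) : f x ≤ f y + w.length := by
  induction w with
  | nil => simp
  | cons h w ih =>
    have := hf _ _ h
    simp only [Walk.length_cons]
    push_cast
    push_cast at ih
    linarith

/-- Projections of walks. -/
lemma proj_walk (f : α → β) (hf : ∀ x y, G.Adj x y → f x = f y ∨ H.Adj (f x) (f y))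
    {x y : α} (w : G.Walk x y) : ∃ w' : H.Walk (f x) (f y), w'.length ≤ w.length := by
  induction w with
  | nil => exact ⟨Walk.nil, by simp⟩
  | cons h w ih =>
    obtain ⟨w', hw'⟩ := ih
    rcases hf _ _ h with he | ha
    · rw [he]; exact ⟨w', by simp; omega⟩
    · exact ⟨Walk.cons ha w', by simp; omega⟩

end Walks

section Aux2

open SimpleGraph

variable {V : Type*} [Fintype V] [DecidableEq V] {Ghat : SimpleGraph V} {L : Finset V} {r : ℕ}

local notation "BB" => ({o : V // o ∈ Lᶜ} × Fin 8)
local notation "VV" => ((V ⊕ ({o : V // o ∈ Lᶜ} × Fin 8)) ⊕ (Σ _p : {o : V // o ∈ Lᶜ} × Fin 8, Fin (r - 1)))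
local notation "GG" => (Ghat.addPaths ({o : V // o ∈ Lᶜ} × Fin 8) ({o : V // o ∈ Lᶜ} × Fin 8) (src17 L) (dst17 L) (fun _ => r))

lemma walk_src_to_int (p : BB) (i : Fin (r - 1)) :
    ∃ w : (GG).Walk (.inl (src17 L p)) (.inr ⟨p, i⟩), w.length = (i : ℕ) + 1 := by
  obtain ⟨n, hn⟩ := i
  induction n with
  | zero => exact ⟨Walk.cons (adj_src_int p ⟨0, hn⟩ rfl) Walk.nil, by simp⟩
  | succ m ih =>
    obtain ⟨w, hw⟩ := ih (by omega)
    exact ⟨w.concat (adj_int_int p ⟨m, by omega⟩ ⟨m + 1, hn⟩ rfl),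
      by rw [Walk.length_concat, hw]⟩

lemma walk_int_to_dst (p : BB) (i : Fin (r - 1)) :
    ∃ w : (GG).Walk (.inr ⟨p, i⟩) (.inl (dst17 L p)), w.length = r - 1 - (i : ℕ) := by
  obtain ⟨n, hn⟩ := i
  have key : ∀ m : ℕ, ∀ n : ℕ, ∀ hn : n < r - 1, r - 2 - n = m →
      ∃ w : (GG).Walk (.inr ⟨p, ⟨n, hn⟩⟩) (.inl (dst17 L p)), w.length = r - 1 - n := by
    intro m
    induction m with
    | zero =>
      intro n hn hm
      refine ⟨Walk.cons (adj_int_dst p ⟨n, hn⟩ (show n + 2 = r by omega)) Walk.nil, by simp only [Walk.length_cons, Walk.length_nil]; omega⟩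
    | succ k ih =>
      intro n hn hm
      obtain ⟨w, hw⟩ := ih (n + 1) (by omega) (by omega)
      exact ⟨Walk.cons (adj_int_int p ⟨n, hn⟩ ⟨n + 1, by omega⟩ rfl) w, by simp only [Walk.length_cons, hw]; omega⟩
  exact key (r - 2 - n) n hn rfl

lemma walk_src_to_dst (hr : 1 ≤ r) (p : BB) :
    ∃ w : (GG).Walk (.inl (src17 L p)) (.inl (dst17 L p)), w.length = r := by
  rcases eq_or_lt_of_le hr with h1 | h2
  · exact ⟨Walk.cons (adj_src_dst p h1.symm) Walk.nil, by simp only [Walk.length_cons, Walk.length_nil]; omega⟩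
  · obtain ⟨w, hw⟩ := walk_src_to_int (r := r) p ⟨0, by omega⟩
    obtain ⟨w', hw'⟩ := walk_int_to_dst (r := r) p ⟨0, by omega⟩
    refine ⟨w.append w', ?_⟩
    rw [Walk.length_append, hw, hw']
    simp only [Fin.val_mk]
    omega

end Aux2

section Lip

open SimpleGraph

/-- Generic Lipschitz criterion for `addPaths`. -/
lemma addPaths_lip {V B P : Type*} {G : SimpleGraph V} {src dst : P → V ⊕ B} {len : P → ℕ}
    (f : ((V ⊕ B) ⊕ (Σ p : P, Fin (len p - 1))) → ℤ)
    (h1 : ∀ u w, G.Adj u w → |f (.inl (.inl u)) - f (.inl (.inl w))| ≤ 1)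
    (h2 : ∀ p, len p = 1 → |f (.inl (src p)) - f (.inl (dst p))| ≤ 1)
    (h3 : ∀ p (i : Fin (len p - 1)), (i : ℕ) = 0 → |f (.inl (src p)) - f (.inr ⟨p, i⟩)| ≤ 1)
    (h4 : ∀ p (i j : Fin (len p - 1)), (i : ℕ) + 1 = (j : ℕ) →
      |f (.inr ⟨p, i⟩) - f (.inr ⟨p, j⟩)| ≤ 1)
    (h5 : ∀ p (i : Fin (len p - 1)), (i : ℕ) + 2 = len p → |f (.inr ⟨p, i⟩) - f (.inl (dst p))| ≤ 1) :
    ∀ x y, (G.addPaths B P src dst len).Adj x y → f x ≤ f y + 1 := by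
  have key : ∀ x y : ((V ⊕ B) ⊕ (Σ p : P, Fin (len p - 1))),
      ((∃ u w, G.Adj u w ∧ x = .inl (.inl u) ∧ y = .inl (.inl w)) ∨
      (∃ p : P, len p = 1 ∧ x = .inl (src p) ∧ y = .inl (dst p)) ∨
      (∃ p : P, ∃ i : Fin (len p - 1), (i : ℕ) = 0 ∧ x = .inl (src p) ∧ y = .inr ⟨p, i⟩) ∨
      (∃ p : P, ∃ i j : Fin (len p - 1), (i : ℕ) + 1 = (j : ℕ) ∧ x = .inr ⟨p, i⟩ ∧ y = .inr ⟨p, j⟩) ∨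
      (∃ p : P, ∃ i : Fin (len p - 1), (i : ℕ) + 2 = len p ∧ x = .inr ⟨p, i⟩ ∧ y = .inl (dst p))) →
      |f x - f y| ≤ 1 := by
    rintro x y (⟨u, w, ha, rfl, rfl⟩ | ⟨p, hp, rfl, rfl⟩ | ⟨p, i, hi, rfl, rfl⟩ |
      ⟨p, i, j, hij, rfl, rfl⟩ | ⟨p, i, hi, rfl, rfl⟩)
    · exact h1 u w ha
    · exact h2 p hp
    · exact h3 p i hi
    · exact h4 p i j hij
    · exact h5 p i hi
  intro x y h
  rw [SimpleGraph.addPaths, SimpleGraph.fromRel_adj] at h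
  obtain ⟨-, h | h⟩ := h
  · have := abs_le.mp (key x y h); omega
  · have := abs_le.mp (key y x h); omega

end Lip

section Aux3

open SimpleGraph

variable {V : Type*} [Fintype V] [DecidableEq V] {Ghat : SimpleGraph V} {L : Finset V} {r : ℕ}

local notation "BB" => ({o : V // o ∈ Lᶜ} × Fin 8)
local notation "VV" => ((V ⊕ ({o : V // o ∈ Lᶜ} × Fin 8)) ⊕ (Σ _p : {o : V // o ∈ Lᶜ} × Fin 8, Fin (r - 1)))
local notation "GG" => (Ghat.addPaths ({o : V // o ∈ Lᶜ} × Fin 8) ({o : V // o ∈ Lᶜ} × Fin 8) (src17 L) (dst17 L) (fun _ => r))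

/-- Potential measuring proximity to node `(o, tv)`, whose path starts at node `(o, bv)`. -/
def chi (o : {o : V // o ∈ Lᶜ}) (tv bv : ℕ) : VV → ℤ
  | .inl (.inl _) => (r : ℤ) + 1
  | .inl (.inr n) =>
      if n.1 = o then
        (if n.2.1 = bv then (r : ℤ) else if n.2.1 = tv then 0 else (r : ℤ) + 1)
      else (r : ℤ) + 1
  | .inr q =>
      if q.1.1 = o then
        (if q.1.2.1 = tv then (r : ℤ) - 1 - (q.2 : ℕ) else (r : ℤ) + 1)
      else (r : ℤ) + 1

lemma chi_lip (hr : 1 ≤ r) (o : {o : V // o ∈ Lᶜ}) (tv bv : ℕ)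
    (htb : (tv = 2 ∧ bv = 0) ∨ (tv = 5 ∧ bv = 1)) :
    ∀ x y : VV, (GG).Adj x y → chi o tv bv x ≤ chi o tv bv y + 1 := by
  apply addPaths_lip
  · intro u w _
    simp only [chi, abs_le]
    omega
  · rcases htb with ⟨rfl, rfl⟩ | ⟨rfl, rfl⟩ <;>
    · intro p hp
      simp only [src17, dst17]
      split_ifs <;>
        simp only [chi, Fin.val_zero, Fin.val_one] <;>
        split_ifs <;> first | (rw [abs_le]; constructor <;> omega) | simp_all
  · rcases htb with ⟨rfl, rfl⟩ | ⟨rfl, rfl⟩ <;>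
    · intro p i hi
      simp only [src17]
      split_ifs <;>
        simp only [chi, Fin.val_zero, Fin.val_one] <;>
        split_ifs <;> first | (rw [abs_le]; constructor <;> omega) | simp_all
  · rcases htb with ⟨rfl, rfl⟩ | ⟨rfl, rfl⟩ <;>
    · intro p i j hij
      simp only [chi]
      split_ifs <;> first | (rw [abs_le]; constructor <;> omega) | simp_all
  · rcases htb with ⟨rfl, rfl⟩ | ⟨rfl, rfl⟩ <;>
    · intro p i hi
      simp only [dst17, chi, Fin.val_zero, Fin.val_one]
      split_ifs <;> first | (rw [abs_le]; constructor <;> omega) | simp_all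

end Aux3

section Aux4

open SimpleGraph

variable {V : Type*} [Fintype V] [DecidableEq V] {Ghat : SimpleGraph V} {L : Finset V} {r : ℕ}

local notation "BB" => ({o : V // o ∈ Lᶜ} × Fin 8)
local notation "VV" => ((V ⊕ ({o : V // o ∈ Lᶜ} × Fin 8)) ⊕ (Σ _p : {o : V // o ∈ Lᶜ} × Fin 8, Fin (r - 1)))
local notation "GG" => (Ghat.addPaths ({o : V // o ∈ Lᶜ} × Fin 8) ({o : V // o ∈ Lᶜ} × Fin 8) (src17 L) (dst17 L) (fun _ => r))

/-- Classification of vertices `r`-close to the node `(o, t)`. -/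
lemma chi_near (hr : 1 ≤ r) (o : {o : V // o ∈ Lᶜ}) (tv bv : ℕ) (t b : Fin 8)
    (ht : (t : Fin 8).1 = tv) (hb : (b : Fin 8).1 = bv)
    (htb : (tv = 2 ∧ bv = 0) ∨ (tv = 5 ∧ bv = 1)) {x : VV}
    (w : (GG).Walk x (.inl (.inr (o, t)))) (hwl : w.length ≤ r) :
    x = .inl (.inr (o, b)) ∨ x = .inl (.inr (o, t)) ∨ ∃ i, x = .inr ⟨(o, t), i⟩ := by
  have hx := lip_walk (chi o tv bv) (chi_lip hr o tv bv htb) w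
  have hnode : chi o tv bv (.inl (.inr (o, t)) : VV) = 0 := by
    simp only [chi, if_pos rfl, ht]
    split_ifs <;> omega
  rw [hnode] at hx
  rcases x with (v | n) | ⟨p, i⟩
  · simp only [chi] at hx; omega
  · simp only [chi] at hx
    split_ifs at hx with h1 h2 h3
    · left
      obtain ⟨n1, n2⟩ := n
      simp only at h1 h2
      subst h1
      rw [show n2 = b from Fin.ext (by omega)]
    · right; left
      obtain ⟨n1, n2⟩ := n
      simp only at h1 h3
      subst h1
      rw [show n2 = t from Fin.ext (by omega)]
    · omega
    · omega
  · simp only [chi] at hx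
    split_ifs at hx with h1 h2
    · obtain ⟨p1, p2⟩ := p
      simp only at h1 h2
      subst h1
      rw [show p2 = t from Fin.ext (by omega)]
      exact Or.inr (Or.inr ⟨i, rfl⟩)
    · omega
    · omega

/-- Depth potential of the tree copy at `o`. -/
def psi (o : {o : V // o ∈ Lᶜ}) : VV → ℤ
  | .inl (.inl v) => if v = o.1 then 0 else -1
  | .inl (.inr n) =>
      if n.1 = o then
        (if n.2.1 = 0 then (r : ℤ) else if n.2.1 ≤ 4 then 2 * r else 3 * r)
      else -1
  | .inr q =>
      if q.1.1 = o then
        (if q.1.2.1 = 0 then 0 else if q.1.2.1 ≤ 4 then (r : ℤ) else 2 * r) + (q.2 : ℕ) + 1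
      else -1

lemma psi_lip (hr : 1 ≤ r) (o : {o : V // o ∈ Lᶜ}) :
    ∀ x y : VV, (GG).Adj x y → psi o x ≤ psi o y + 1 := by
  apply addPaths_lip
  · intro u w _
    simp only [psi]
    split_ifs <;> first | (rw [abs_le]; constructor <;> omega) | simp_all
  · intro p hp
    have hp' : r = 1 := hp
    simp only [src17, dst17]
    split_ifs <;>
      simp only [psi, Fin.val_zero, Fin.val_one, Subtype.coe_inj] <;>
      split_ifs <;> first | (rw [abs_le]; constructor <;> omega) | simp_all
  · intro p i hi
    simp only [src17]
    split_ifs <;>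
      simp only [psi, Fin.val_zero, Fin.val_one, Subtype.coe_inj] <;>
      split_ifs <;> first | (rw [abs_le]; constructor <;> omega) | simp_all
  · intro p i j hij
    simp only [psi]
    split_ifs <;> first | (rw [abs_le]; constructor <;> omega) | simp_all
  · intro p i hi
    have hi' : (i : ℕ) + 2 = r := hi
    simp only [dst17, psi, Fin.val_zero, Fin.val_one]
    split_ifs <;> first | (rw [abs_le]; constructor <;> omega) | simp_all

lemma psi_far_node (hr : 1 ≤ r) {o : {o : V // o ∈ Lᶜ}} {j : Fin 8} {v : V} (hv : v ∈ L)
    (w : (GG).Walk (.inl (.inr (o, j))) (.inl (.inl v))) (hwl : w.length ≤ r) : False := by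
  have hne : v ≠ o.1 := fun h => (Finset.mem_compl.mp o.2) (h ▸ hv)
  have hx := lip_walk (psi o) (psi_lip hr o) w
  simp only [psi, if_pos rfl, if_neg hne] at hx
  split_ifs at hx <;> omega

lemma psi_shallow (hr : 1 ≤ r) {o : {o : V // o ∈ Lᶜ}} {p : Fin 8} {i : Fin (r - 1)} {v : V}
    (hv : v ∈ L) (w : (GG).Walk (.inr ⟨(o, p), i⟩) (.inl (.inl v))) (hwl : w.length ≤ r) :
    p = 0 := by
  have hne : v ≠ o.1 := fun h => (Finset.mem_compl.mp o.2) (h ▸ hv)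
  have hx := lip_walk (psi o) (psi_lip hr o) w
  simp only [psi, if_pos rfl, if_neg hne] at hx
  refine Fin.ext ?_
  split_ifs at hx with h1 h2 <;> omega

end Aux4

section Aux5

open SimpleGraph

variable {V : Type*} [Fintype V] [DecidableEq V] {Ghat : SimpleGraph V} {L : Finset V} {r : ℕ}

local notation "BB" => ({o : V // o ∈ Lᶜ} × Fin 8)
local notation "VV" => ((V ⊕ ({o : V // o ∈ Lᶜ} × Fin 8)) ⊕ (Σ _p : {o : V // o ∈ Lᶜ} × Fin 8, Fin (r - 1)))
local notation "GG" => (Ghat.addPaths ({o : V // o ∈ Lᶜ} × Fin 8) ({o : V // o ∈ Lᶜ} × Fin 8) (src17 L) (dst17 L) (fun _ => r))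

/-- Embedding of the original graph. -/
def origHom : Ghat →g GG where
  toFun v := .inl (.inl v)
  map_rel' h := adj_orig h

@[simp] lemma origHom_apply (v : V) : (origHom (Ghat := Ghat) (L := L) (r := r)) v = .inl (.inl v) := rfl

/-- Projection collapsing each tree copy to its root. -/
def proj : VV → V
  | .inl (.inl v) => v
  | .inl (.inr n) => n.1.1
  | .inr q => q.1.1.1

lemma proj_src (p : BB) : proj (.inl (src17 L p) : VV) = p.1.1 := by
  simp only [src17]
  split_ifs <;> rfl

lemma proj_adj : ∀ x y : VV, (GG).Adj x y → proj x = proj y ∨ Ghat.Adj (proj x) (proj y) := by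
  have key : ∀ x y : VV,
      ((∃ u w, Ghat.Adj u w ∧ x = .inl (.inl u) ∧ y = .inl (.inl w)) ∨
      (∃ p : BB, (fun _ : BB => r) p = 1 ∧ x = .inl (src17 L p) ∧ y = .inl (dst17 L p)) ∨
      (∃ p : BB, ∃ i : Fin (r - 1), (i : ℕ) = 0 ∧ x = .inl (src17 L p) ∧ y = .inr ⟨p, i⟩) ∨
      (∃ p : BB, ∃ i j : Fin (r - 1), (i : ℕ) + 1 = (j : ℕ) ∧ x = .inr ⟨p, i⟩ ∧ y = .inr ⟨p, j⟩) ∨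
      (∃ p : BB, ∃ i : Fin (r - 1), (i : ℕ) + 2 = r ∧ x = .inr ⟨p, i⟩ ∧ y = .inl (dst17 L p))) →
      proj x = proj y ∨ Ghat.Adj (proj x) (proj y) := by
    rintro x y (⟨u, w, ha, rfl, rfl⟩ | ⟨p, hp, rfl, rfl⟩ | ⟨p, i, hi, rfl, rfl⟩ |
      ⟨p, i, j, hij, rfl, rfl⟩ | ⟨p, i, hi, rfl, rfl⟩)
    · exact Or.inr ha
    · exact Or.inl (by rw [proj_src]; rfl)
    · exact Or.inl (by rw [proj_src]; rfl)
    · exact Or.inl rfl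
    · exact Or.inl rfl
  intro x y h
  rw [SimpleGraph.addPaths, SimpleGraph.fromRel_adj] at h
  obtain ⟨-, h | h⟩ := h
  · exact key x y h
  · rcases key y x h with h' | h'
    · exact Or.inl h'.symm
    · exact Or.inr h'.symm

/-- Classification into: original vertex (`none`), or copy `o`, part `0` (the internal
vertices of the `b₀`–`b₁` path), part `1` (the `b₁`-side), part `2` (the `b₂`-side). -/
def cls : VV → Option ({o : V // o ∈ Lᶜ} × Fin 3)
  | .inl (.inl _) => none
  | .inl (.inr n) =>
      some (n.1, if n.2.1 = 0 then 1 else if n.2.1 = 1 then 2 else if n.2.1 ≤ 4 then 1 else 2)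
  | .inr q => some (q.1.1, if q.1.2.1 = 0 then 0 else if q.1.2.1 ≤ 4 then 1 else 2)

lemma cls_near2 (hr : 1 ≤ r) (o : {o : V // o ∈ Lᶜ}) {x : VV}
    (w : (GG).Walk x (.inl (.inr (o, 2)))) (hwl : w.length ≤ r) :
    cls x = some (o, 1) := by
  rcases chi_near hr o 2 0 2 0 (by decide) (by decide) (Or.inl ⟨rfl, rfl⟩) w hwl with
    h | h | ⟨i, h⟩ <;> subst h <;> simp only [cls, Option.some.injEq, Prod.mk.injEq, true_and] <;> rfl
lemma cls_near5 (hr : 1 ≤ r) (o : {o : V // o ∈ Lᶜ}) {x : VV}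
    (w : (GG).Walk x (.inl (.inr (o, 5)))) (hwl : w.length ≤ r) :
    cls x = some (o, 2) := by
  rcases chi_near hr o 5 1 5 1 (by decide) (by decide) (Or.inr ⟨rfl, rfl⟩) w hwl with
    h | h | ⟨i, h⟩ <;> subst h <;> simp only [cls, Option.some.injEq, Prod.mk.injEq, true_and] <;> rfl

end Aux5

open SimpleGraph in
/-- Let `G'` be obtained from `Ĝ` by attaching to every vertex of
`O = V(Ĝ) ∖ L` a fresh copy of the tree `T` (built from `b₀, b₁, b₂, a₁, …, a₆` by
paths of length `r` as described), identifying `b₀` with that vertex.  Then the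
minimum size of an `r`-dominating set of `G'` equals `2·|O|` plus the minimum size of
a set `D ⊆ V(Ĝ)` that `r`-dominates `L` in `Ĝ`. -/
theorem domination_multikernel_trees {V : Type*} [Fintype V] [DecidableEq V]
    (Ghat : SimpleGraph V) (L : Finset V) (r : ℕ) (hr : 1 ≤ r) :
    sInf {n : ℕ |
        ∃ D' : Set ((V ⊕ ({o : V // o ∈ Lᶜ} × Fin 8)) ⊕
            (Σ _p : {o : V // o ∈ Lᶜ} × Fin 8, Fin (r - 1))),
          (∀ x, ∃ d ∈ D',
            ∃ w : (Ghat.addPaths ({o : V // o ∈ Lᶜ} × Fin 8) ({o : V // o ∈ Lᶜ} × Fin 8)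
                (src17 L) (dst17 L) (fun _ => r)).Walk d x, w.length ≤ r) ∧
          D'.ncard = n}
      = 2 * Lᶜ.card +
        sInf {n : ℕ | ∃ D : Set V,
          (∀ v ∈ L, ∃ d ∈ D, ∃ w : Ghat.Walk d v, w.length ≤ r) ∧ D.ncard = n} := by
  classical
  set R : Set ℕ := {n : ℕ | ∃ D : Set V,
      (∀ v ∈ L, ∃ d ∈ D, ∃ w : Ghat.Walk d v, w.length ≤ r) ∧ D.ncard = n} with hR
  have hRne : R.Nonempty :=
    ⟨(Set.univ : Set V).ncard, Set.univ, fun v _ => ⟨v, Set.mem_univ v, Walk.nil, by simp⟩, rfl⟩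
  obtain ⟨D, hD, hDcard⟩ := Nat.sInf_mem hRne
  have hcardO : Fintype.card {o : V // o ∈ Lᶜ} = Lᶜ.card := Fintype.card_coe _
  apply le_antisymm
  · -- upper bound
    apply Nat.sInf_le
    refine ⟨((fun v => .inl (.inl v)) '' D ∪
        (fun o : {o : V // o ∈ Lᶜ} => .inl (.inr (o, 0))) '' Set.univ) ∪
        (fun o : {o : V // o ∈ Lᶜ} => .inl (.inr (o, 1))) '' Set.univ, ?_, ?_⟩
    · rintro ((v | ⟨o, j⟩) | ⟨⟨o, p⟩, i⟩)
      · by_cases hv : v ∈ L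
        · obtain ⟨d, hd, w, hwl⟩ := hD v hv
          exact ⟨.inl (.inl d), Or.inl (Or.inl ⟨d, hd, rfl⟩), w.map origHom,
            (Walk.length_map ..).trans_le hwl⟩
        · have hv' : v ∈ Lᶜ := Finset.mem_compl.mpr hv
          obtain ⟨w, hwl⟩ := walk_src_to_dst hr (⟨v, hv'⟩, 0)
          refine ⟨.inl (.inr (⟨v, hv'⟩, 0)), Or.inl (Or.inr ⟨⟨v, hv'⟩, Set.mem_univ _, rfl⟩),
            w.reverse.copy (by simp [dst17]) (by simp [src17]), ?_⟩
          exact (Walk.length_copy ..).trans_le (by rw [Walk.length_reverse, hwl])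
      · by_cases hj0 : (j : ℕ) = 0
        · have : j = 0 := Fin.ext hj0
          subst this
          exact ⟨.inl (.inr (o, 0)), Or.inl (Or.inr ⟨o, Set.mem_univ _, rfl⟩), Walk.nil,
            by simp⟩
        · by_cases hj1 : (j : ℕ) = 1
          · have : j = 1 := Fin.ext hj1
            subst this
            exact ⟨.inl (.inr (o, 1)), Or.inr ⟨o, Set.mem_univ _, rfl⟩, Walk.nil,
              by simp⟩
          · obtain ⟨w, hwl⟩ := walk_src_to_dst hr (o, j)
            refine ⟨.inl (src17 L (o, j)), ?_, w.copy rfl (by simp [dst17]), ?_⟩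
            · by_cases hj4 : (j : ℕ) ≤ 4
              · exact Or.inl (Or.inr ⟨o, Set.mem_univ _, by simp [src17, hj0, hj4]⟩)
              · exact Or.inr ⟨o, Set.mem_univ _, by simp [src17, hj0, hj4]⟩
            · exact (Walk.length_copy ..).trans_le hwl.le
      · by_cases hp0 : (p : ℕ) = 0
        · have : p = 0 := Fin.ext hp0
          subst this
          obtain ⟨w, hwl⟩ := walk_int_to_dst (o, 0) i
          refine ⟨.inl (.inr (o, 0)), Or.inl (Or.inr ⟨o, Set.mem_univ _, rfl⟩),
            w.reverse.copy (by simp [dst17]) rfl, ?_⟩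
          exact (Walk.length_copy ..).trans_le (by rw [Walk.length_reverse, hwl]; omega)
        · obtain ⟨w, hwl⟩ := walk_src_to_int (o, p) i
          refine ⟨.inl (src17 L (o, p)), ?_, w, ?_⟩
          · by_cases hp4 : (p : ℕ) ≤ 4
            · exact Or.inl (Or.inr ⟨o, Set.mem_univ _, by simp [src17, hp0, hp4]⟩)
            · exact Or.inr ⟨o, Set.mem_univ _, by simp [src17, hp0, hp4]⟩
          · rw [hwl]; have := i.2; omega
    · -- cardinality
      have hinj1 : Function.Injective
          (fun v : V => (.inl (.inl v) : (V ⊕ ({o : V // o ∈ Lᶜ} × Fin 8)) ⊕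
            (Σ _p : {o : V // o ∈ Lᶜ} × Fin 8, Fin (r - 1)))) := by
        intro a b h; simpa using h
      have hinj2 : Function.Injective
          (fun o : {o : V // o ∈ Lᶜ} => (.inl (.inr (o, 0)) : (V ⊕ ({o : V // o ∈ Lᶜ} × Fin 8)) ⊕
            (Σ _p : {o : V // o ∈ Lᶜ} × Fin 8, Fin (r - 1)))) := by
        intro a b h; simpa using h
      have hinj3 : Function.Injective
          (fun o : {o : V // o ∈ Lᶜ} => (.inl (.inr (o, 1)) : (V ⊕ ({o : V // o ∈ Lᶜ} × Fin 8)) ⊕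
            (Σ _p : {o : V // o ∈ Lᶜ} × Fin 8, Fin (r - 1)))) := by
        intro a b h; simpa using h
      have hd12 : Disjoint ((fun v : V => (.inl (.inl v) : (V ⊕ ({o : V // o ∈ Lᶜ} × Fin 8)) ⊕
            (Σ _p : {o : V // o ∈ Lᶜ} × Fin 8, Fin (r - 1)))) '' D)
          ((fun o : {o : V // o ∈ Lᶜ} => .inl (.inr (o, 0))) '' Set.univ) := by
        rw [Set.disjoint_left]
        rintro x ⟨v, -, rfl⟩ ⟨o, -, h⟩
        simp at h
      have hd3 : Disjoint ((fun v : V => (.inl (.inl v) : (V ⊕ ({o : V // o ∈ Lᶜ} × Fin 8)) ⊕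
            (Σ _p : {o : V // o ∈ Lᶜ} × Fin 8, Fin (r - 1)))) '' D ∪
          (fun o : {o : V // o ∈ Lᶜ} => .inl (.inr (o, 0))) '' Set.univ)
          ((fun o : {o : V // o ∈ Lᶜ} => .inl (.inr (o, 1))) '' Set.univ) := by
        rw [Set.disjoint_left]
        rintro x (⟨v, -, rfl⟩ | ⟨o, -, rfl⟩) ⟨o', -, h⟩ <;> simp at h
      rw [Set.ncard_union_eq hd3 (Set.toFinite _) (Set.toFinite _),
        Set.ncard_union_eq hd12 (Set.toFinite _) (Set.toFinite _),
        Set.ncard_image_of_injective _ hinj1, Set.ncard_image_of_injective _ hinj2,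
        Set.ncard_image_of_injective _ hinj3, Set.ncard_univ, Nat.card_eq_fintype_card,
        hcardO, hDcard]
      omega
  · -- lower bound
    apply le_csInf
    · exact ⟨(Set.univ : Set _).ncard, Set.univ,
        fun x => ⟨x, Set.mem_univ x, Walk.nil, by simp⟩, rfl⟩
    · rintro n ⟨D', hdom, rfl⟩
      set Dlow : Set V := {v | .inl (.inl v) ∈ D'} ∪
        {v | ∃ h : v ∈ Lᶜ, ∃ i : Fin (r - 1), .inr ⟨(⟨v, h⟩, 0), i⟩ ∈ D'} with hDlowdef
      have hdomL : ∀ v ∈ L, ∃ d ∈ Dlow, ∃ w : Ghat.Walk d v, w.length ≤ r := by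
        intro v hv
        obtain ⟨d, hd, w, hwl⟩ := hdom (.inl (.inl v))
        rcases d with (u | ⟨o, j⟩) | ⟨⟨o, p⟩, i⟩
        · obtain ⟨w', hw'⟩ := proj_walk proj proj_adj w
          exact ⟨u, Or.inl hd, w', hw'.trans hwl⟩
        · exact (psi_far_node hr hv w hwl).elim
        · have hp0 : p = 0 := psi_shallow hr hv w hwl
          subst hp0
          obtain ⟨w', hw'⟩ := proj_walk proj proj_adj w
          exact ⟨o.1, Or.inr ⟨o.2, i, hd⟩, w', hw'.trans hwl⟩
      have hmle : sInf R ≤ Dlow.ncard := Nat.sInf_le ⟨Dlow, hdomL, rfl⟩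
      set F := D'.toFinset with hFdef
      have hsum : F.card = ∑ c : Option ({o : V // o ∈ Lᶜ} × Fin 3),
          (F.filter (fun x => cls x = c)).card :=
        Finset.card_eq_sum_card_fiberwise (fun x _ => Finset.mem_univ _)
      rw [Fintype.sum_option, Fintype.sum_prod_type] at hsum
      have h1o : ∀ o : {o : V // o ∈ Lᶜ},
          1 ≤ (F.filter (fun x => cls x = some (o, 1))).card := by
        intro o
        obtain ⟨d, hd, w, hwl⟩ := hdom (.inl (.inr (o, 2)))
        exact Finset.card_pos.mpr ⟨d, Finset.mem_filter.mpr
          ⟨Set.mem_toFinset.mpr hd, cls_near2 hr o w hwl⟩⟩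
      have h2o : ∀ o : {o : V // o ∈ Lᶜ},
          1 ≤ (F.filter (fun x => cls x = some (o, 2))).card := by
        intro o
        obtain ⟨d, hd, w, hwl⟩ := hdom (.inl (.inr (o, 5)))
        exact Finset.card_pos.mpr ⟨d, Finset.mem_filter.mpr
          ⟨Set.mem_toFinset.mpr hd, cls_near5 hr o w hwl⟩⟩
      have h0o : ∀ o : {o : V // o ∈ Lᶜ},
          (if ∃ i : Fin (r - 1), .inr ⟨(o, 0), i⟩ ∈ D' then 1 else 0) ≤
          (F.filter (fun x => cls x = some (o, 0))).card := by
        intro o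
        split_ifs with h
        · obtain ⟨i, hi⟩ := h
          exact Finset.card_pos.mpr ⟨_, Finset.mem_filter.mpr
            ⟨Set.mem_toFinset.mpr hi, rfl⟩⟩
        · exact Nat.zero_le _
      have hsum2 : (∑ o : {o : V // o ∈ Lᶜ},
            (if ∃ i : Fin (r - 1), .inr ⟨(o, 0), i⟩ ∈ D' then 1 else 0)) +
            2 * Fintype.card {o : V // o ∈ Lᶜ} ≤
          ∑ o : {o : V // o ∈ Lᶜ}, ∑ b : Fin 3,
            (F.filter (fun x => cls x = some (o, b))).card := by
        have step : ∀ o ∈ (Finset.univ : Finset {o : V // o ∈ Lᶜ}),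
            (if ∃ i : Fin (r - 1), .inr ⟨(o, 0), i⟩ ∈ D' then 1 else 0) + 2 ≤
            ∑ b : Fin 3, (F.filter (fun x => cls x = some (o, b))).card := by
          intro o _
          rw [Fin.sum_univ_three]
          have := h0o o
          have := h1o o
          have := h2o o
          omega
        calc (∑ o : {o : V // o ∈ Lᶜ},
              (if ∃ i : Fin (r - 1), .inr ⟨(o, 0), i⟩ ∈ D' then 1 else 0)) +
              2 * Fintype.card {o : V // o ∈ Lᶜ}
            = ∑ o : {o : V // o ∈ Lᶜ},
              ((if ∃ i : Fin (r - 1), .inr ⟨(o, 0), i⟩ ∈ D' then 1 else 0) + 2) := by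
              rw [Finset.sum_add_distrib, Finset.sum_const, Finset.card_univ, smul_eq_mul]
              ring
          _ ≤ _ := Finset.sum_le_sum step
      have hnone : ({v : V | .inl (.inl v) ∈ D'}).ncard ≤
          (F.filter (fun x => cls x = none)).card := by
        rw [Set.ncard_eq_toFinset_card']
        apply Finset.card_le_card_of_injOn (fun v => .inl (.inl v))
        · intro v hv
          rw [Finset.mem_coe, Set.mem_toFinset] at hv
          exact Finset.mem_filter.mpr ⟨Set.mem_toFinset.mpr hv, rfl⟩
        · intro a _ b _ h; simpa using h
      have hD1 : ({v : V | ∃ h : v ∈ Lᶜ, ∃ i : Fin (r - 1), .inr ⟨(⟨v, h⟩, 0), i⟩ ∈ D'}).ncard =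
          (Finset.univ.filter (fun o : {o : V // o ∈ Lᶜ} =>
            ∃ i : Fin (r - 1), .inr ⟨(o, 0), i⟩ ∈ D')).card := by
        have himg : {v : V | ∃ h : v ∈ Lᶜ, ∃ i : Fin (r - 1), .inr ⟨(⟨v, h⟩, 0), i⟩ ∈ D'} =
            Subtype.val '' {o : {o : V // o ∈ Lᶜ} |
              ∃ i : Fin (r - 1), .inr ⟨(o, 0), i⟩ ∈ D'} := by
          ext v
          constructor
          · rintro ⟨h, i, hi⟩; exact ⟨⟨v, h⟩, ⟨i, hi⟩, rfl⟩
          · rintro ⟨o, ⟨i, hi⟩, rfl⟩; exact ⟨o.2, i, hi⟩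
        rw [himg, Set.ncard_image_of_injective _ Subtype.val_injective,
          Set.ncard_eq_toFinset_card', Set.toFinset_setOf]
      have hfilt : (Finset.univ.filter (fun o : {o : V // o ∈ Lᶜ} =>
          ∃ i : Fin (r - 1), .inr ⟨(o, 0), i⟩ ∈ D')).card =
          ∑ o : {o : V // o ∈ Lᶜ},
            (if ∃ i : Fin (r - 1), .inr ⟨(o, 0), i⟩ ∈ D' then 1 else 0) :=
        Finset.card_filter _ _
      have hDlowle : Dlow.ncard ≤ ({v : V | .inl (.inl v) ∈ D'}).ncard +
          ({v : V | ∃ h : v ∈ Lᶜ, ∃ i : Fin (r - 1), .inr ⟨(⟨v, h⟩, 0), i⟩ ∈ D'}).ncard :=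
        Set.ncard_union_le _ _
      have hcardD' : D'.ncard = F.card := Set.ncard_eq_toFinset_card' D'
      rw [hcardD', hsum, ← hcardO]
      omega
end
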